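/- arXiv:2304.00479 — 5 statements merged into one kernel-verified Lean document; each statement's English description precedes it below -/
import Mathlib

section
/- Let f : (k+1)^N → ℝ be a k-submodular function with f(∅,…,∅) = 0. For every X ∈ (k+1)^N with binary encoding x and every w ∈ ℝ, we have w ≤ f(X) if and only if for every S ∈ (k+1)^N, w ≤ f(S) + Σ_{q=1}^k Σ_{i ∉ ∪_{r=1}^k S_r} ρ_{q,i}(S) x_i^q + Σ_{q=1}^k Σ_{p ≠ q} Σ_{i ∈ S_p} ρ_{q,i}(∅,…,∅) x_i^q − Σ_{q=1}^k Σ_{i ∈ S_q} ξ_i^q (1 − x_i^q); in particular the minimum over S of the right-hand side equals f(X), attained at S = X. -/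
/-- A `k`-set: a `k`-tuple of pairwise disjoint subsets of `N = {1,…,n}`. -/
def IsKSet {n k : ℕ} (S : Fin k → Finset (Fin n)) : Prop :=
  ∀ p q : Fin k, p ≠ q → Disjoint (S p) (S q)

/-- Component-wise intersection `X ⊓ Y` of two `k`-sets. -/
def kInf {n k : ℕ} (X Y : Fin k → Finset (Fin n)) : Fin k → Finset (Fin n) :=
  fun q => X q ∩ Y q

/-- The operation `X ⊔ Y`: `(X ⊔ Y)_q = (X_q ∪ Y_q) \ ∪_{p ≠ q}(X_p ∪ Y_p)`. -/
def kSup {n k : ℕ} (X Y : Fin k → Finset (Fin n)) : Fin k → Finset (Fin n) :=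
  fun q => (X q ∪ Y q) \ (Finset.univ.erase q).biUnion (fun p => X p ∪ Y p)

/-- `f : (k+1)^N → ℝ` is `k`-submodular if
`f(X) + f(Y) ≥ f(X ⊓ Y) + f(X ⊔ Y)` for all `k`-sets `X, Y`. -/
def KSubmodular {n k : ℕ} (f : (Fin k → Finset (Fin n)) → ℝ) : Prop :=
  ∀ X Y : Fin k → Finset (Fin n), IsKSet X → IsKSet Y →
    f (kInf X Y) + f (kSup X Y) ≤ f X + f Y

/-- The marginal return `ρ_{q,i}(X) = f(X_1,…,X_q ∪ {i},…,X_k) − f(X)`. -/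
def kMarginal {n k : ℕ} (f : (Fin k → Finset (Fin n)) → ℝ) (q : Fin k)
    (i : Fin n) (X : Fin k → Finset (Fin n)) : ℝ :=
  f (Function.update X q (insert i (X q))) - f X

/-- `ξ_i^q = min{ ρ_{q,i}(S) : S ∈ (k+1)^{N\{i}}, ∪_p S_p = N \ {i} }`. -/
noncomputable def kXi {n k : ℕ} (f : (Fin k → Finset (Fin n)) → ℝ)
    (i : Fin n) (q : Fin k) : ℝ :=
  sInf { r : ℝ | ∃ S : Fin k → Finset (Fin n), IsKSet S ∧
    Finset.univ.biUnion S = Finset.univ \ {i} ∧ r = kMarginal f q i S }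


/-- Right-hand side of the `k`-submodular inequality associated with the `k`-set
`S`, evaluated at (the binary encoding of) the `k`-set `X`. -/
noncomputable def kSubIneqRHS {n k : ℕ} (f : (Fin k → Finset (Fin n)) → ℝ)
    (S X : Fin k → Finset (Fin n)) : ℝ :=
  f S
    + (∑ q : Fin k, ∑ i ∈ Finset.univ \ Finset.univ.biUnion S,
        kMarginal f q i S * (if i ∈ X q then 1 else 0))
    + (∑ q : Fin k, ∑ p ∈ Finset.univ.erase q, ∑ i ∈ S p,
        kMarginal f q i (fun _ => ∅) * (if i ∈ X q then 1 else 0))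
    - ∑ q : Fin k, ∑ i ∈ S q,
        kXi f i q * (1 - (if i ∈ X q then 1 else 0))

lemma isKSet_of_subset {n k : ℕ} {S Y : Fin k → Finset (Fin n)} (hY : IsKSet Y)
    (h : ∀ p, S p ⊆ Y p) : IsKSet S := fun p q hpq =>
  Finset.disjoint_of_subset_left (h p) (Finset.disjoint_of_subset_right (h q) (hY p q hpq))

lemma isKSet_update_insert {n k : ℕ} {S : Fin k → Finset (Fin n)} (hS : IsKSet S)
    {i : Fin n} (hi : ∀ p, i ∉ S p) (q : Fin k) :
    IsKSet (Function.update S q (insert i (S q))) := by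
  intro p r hpr
  rcases eq_or_ne p q with rfl | hp
  · rw [Function.update_self, Function.update_of_ne (Ne.symm hpr)]
    simp only [Finset.disjoint_insert_left]
    exact ⟨hi r, hS p r hpr⟩
  · rw [Function.update_of_ne hp]
    rcases eq_or_ne r q with rfl | hr
    · rw [Function.update_self]
      simp only [Finset.disjoint_insert_right]
      exact ⟨hi p, hS p r hpr⟩
    · rw [Function.update_of_ne hr]; exact hS p r hpr

/-- Orthant submodularity: marginals are antitone. -/
lemma kMarginal_antitone {n k : ℕ} {f : (Fin k → Finset (Fin n)) → ℝ}
    (hf : KSubmodular f) {S Y : Fin k → Finset (Fin n)} (hY : IsKSet Y)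
    (hSY : ∀ p, S p ⊆ Y p) {i : Fin n} (hi : ∀ p, i ∉ Y p) (q : Fin k) :
    kMarginal f q i Y ≤ kMarginal f q i S := by
  have hS : IsKSet S := isKSet_of_subset hY hSY
  have hiS : ∀ p, i ∉ S p := fun p h => hi p (hSY p h)
  set S' := Function.update S q (insert i (S q)) with hS'
  have hS'k : IsKSet S' := isKSet_update_insert hS hiS q
  have key := hf S' Y hS'k hY
  have hinf : kInf S' Y = S := by
    funext p
    rcases eq_or_ne p q with rfl | hp
    · simp only [kInf, hS', Function.update_self]
      rw [Finset.insert_inter_of_notMem (hi p), Finset.inter_eq_left.2 (hSY p)]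
    · simp only [kInf, hS', Function.update_of_ne hp]
      exact Finset.inter_eq_left.2 (hSY p)
  have hcup : ∀ r : Fin k, S' r ∪ Y r = if r = q then insert i (Y q) else Y r := by
    intro r
    rcases eq_or_ne r q with rfl | hr
    · simp only [hS', Function.update_self, if_pos rfl, if_true]
      rw [Finset.insert_union, Finset.union_eq_right.2 (hSY r)]
    · simp only [hS', Function.update_of_ne hr, if_neg hr]
      exact Finset.union_eq_right.2 (hSY r)
  have hsup : kSup S' Y = Function.update Y q (insert i (Y q)) := by
    funext p
    rcases eq_or_ne p q with rfl | hp
    · simp only [kSup, Function.update_self, hcup, if_pos rfl, if_true]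
      rw [Finset.sdiff_eq_self_iff_disjoint.2]
      rw [Finset.disjoint_biUnion_right]
      intro r hr
      rw [Finset.mem_erase] at hr
      rw [if_neg hr.1]
      simp only [Finset.disjoint_insert_left]
      exact ⟨hi r, hY p r (Ne.symm hr.1)⟩
    · simp only [kSup, Function.update_of_ne hp, hcup, if_neg hp]
      rw [Finset.sdiff_eq_self_iff_disjoint.2]
      rw [Finset.disjoint_biUnion_right]
      intro r hr
      rw [Finset.mem_erase] at hr
      rcases eq_or_ne r q with rfl | hrq
      · rw [if_pos rfl]
        simp only [Finset.disjoint_insert_right]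
        exact ⟨hi p, hY p r hp⟩
      · rw [if_neg hrq]
        exact hY p r (Ne.symm hr.1)
  rw [hinf, hsup] at key
  simp only [kMarginal]
  linarith


lemma kXi_le {n k : ℕ} {f : (Fin k → Finset (Fin n)) → ℝ}
    (hf : KSubmodular f) (hk : 0 < k) {Y : Fin k → Finset (Fin n)} (hY : IsKSet Y)
    {i : Fin n} (hi : ∀ p, i ∉ Y p) (q : Fin k) :
    kXi f i q ≤ kMarginal f q i Y := by
  classical
  set E : Finset (Fin n) := (Finset.univ \ {i}) \ Finset.univ.biUnion Y with hE
  set Z : Fin k → Finset (Fin n) := Function.update Y q (Y q ∪ E) with hZ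
  have hYZ : ∀ p, Y p ⊆ Z p := by
    intro p
    rcases eq_or_ne p q with rfl | hp
    · simp [hZ]
    · simp [hZ, Function.update_of_ne hp]
  have hiE : i ∉ E := by simp [hE]
  have hiZ : ∀ p, i ∉ Z p := by
    intro p
    rcases eq_or_ne p q with rfl | hp
    · simp only [hZ, Function.update_self, Finset.mem_union]
      rintro (h | h); exact hi p h; exact hiE h
    · simp only [hZ, Function.update_of_ne hp]; exact hi p
  have hEY : ∀ p, Disjoint E (Y p) := by
    intro p
    refine Finset.disjoint_left.2 fun a ha hay => ?_
    simp only [hE, Finset.mem_sdiff, Finset.mem_biUnion] at ha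
    exact ha.2 ⟨p, Finset.mem_univ p, hay⟩
  have hZk : IsKSet Z := by
    intro p r hpr
    rcases eq_or_ne p q with rfl | hp
    · rw [hZ, Function.update_self, Function.update_of_ne (Ne.symm hpr)]
      exact Finset.disjoint_union_left.2 ⟨hY p r hpr, hEY r⟩
    · rw [hZ, Function.update_of_ne hp]
      rcases eq_or_ne r q with rfl | hr
      · rw [Function.update_self]
        exact Finset.disjoint_union_right.2 ⟨hY p r hpr, (hEY p).symm⟩
      · rw [Function.update_of_ne hr]; exact hY p r hpr
  have hZunion : Finset.univ.biUnion Z = Finset.univ \ {i} := by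
    apply Finset.Subset.antisymm
    · intro a ha
      simp only [Finset.mem_biUnion] at ha
      obtain ⟨p, _, hap⟩ := ha
      rcases eq_or_ne p q with rfl | hp
      · simp only [hZ, Function.update_self, Finset.mem_union] at hap
        rcases hap with h | h
        · simp only [Finset.mem_sdiff, Finset.mem_univ, Finset.mem_singleton, true_and]
          rintro rfl; exact hi p h
        · exact Finset.mem_sdiff.1 (Finset.mem_sdiff.1 h).1 |>.1 |> fun _ => (Finset.mem_sdiff.1 h).1
      · simp only [hZ, Function.update_of_ne hp] at hap
        simp only [Finset.mem_sdiff, Finset.mem_univ, Finset.mem_singleton, true_and]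
        rintro rfl; exact hi p hap
    · intro a ha
      by_cases haY : a ∈ Finset.univ.biUnion Y
      · simp only [Finset.mem_biUnion] at haY ⊢
        obtain ⟨p, _, hap⟩ := haY
        exact ⟨p, Finset.mem_univ p, hYZ p hap⟩
      · have haE : a ∈ E := by rw [hE]; exact Finset.mem_sdiff.2 ⟨ha, haY⟩
        simp only [Finset.mem_biUnion]
        exact ⟨q, Finset.mem_univ q, by simp [hZ, haE]⟩
  have hmem : kMarginal f q i Z ∈ { r : ℝ | ∃ S : Fin k → Finset (Fin n), IsKSet S ∧
      Finset.univ.biUnion S = Finset.univ \ {i} ∧ r = kMarginal f q i S } :=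
    ⟨Z, hZk, hZunion, rfl⟩
  have hfin : ({ r : ℝ | ∃ S : Fin k → Finset (Fin n), IsKSet S ∧
      Finset.univ.biUnion S = Finset.univ \ {i} ∧ r = kMarginal f q i S }).Finite := by
    apply Set.Finite.subset (Set.finite_range fun S : Fin k → Finset (Fin n) => kMarginal f q i S)
    rintro r ⟨S, _, _, rfl⟩
    exact ⟨S, rfl⟩
  have h1 : kXi f i q ≤ kMarginal f q i Z :=
    csInf_le (hfin.bddBelow) hmem
  exact h1.trans (kMarginal_antitone hf hZk hYZ hiZ q)

/-- Adding elements one at a time, with a per-element upper bound `g`. -/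
lemma kAdd_le {n k : ℕ} {f : (Fin k → Finset (Fin n)) → ℝ} :
    ∀ (m : ℕ) (T W : Fin k → Finset (Fin n)) (g : Fin k → Fin n → ℝ),
    (∑ q, (W q).card) = m →
    IsKSet (fun q => T q ∪ W q) →
    (∀ p q, Disjoint (T p) (W q)) →
    (∀ q, ∀ i ∈ W q, ∀ Z : Fin k → Finset (Fin n), IsKSet Z →
      (∀ p, T p ⊆ Z p) → (∀ p, Z p ⊆ T p ∪ W p) → (∀ p, i ∉ Z p) →
      kMarginal f q i Z ≤ g q i) →
    f (fun q => T q ∪ W q) ≤ f T + ∑ q, ∑ i ∈ W q, g q i := by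
  intro m
  induction m with
  | zero =>
    intro T W g hcard _ _ _
    have hW : ∀ q, W q = ∅ := by
      intro q
      exact Finset.card_eq_zero.1 (Finset.sum_eq_zero_iff.1 hcard q (Finset.mem_univ q))
    have : (fun q => T q ∪ W q) = T := by funext q; rw [hW q, Finset.union_empty]
    rw [this]
    simp [hW]
  | succ m ih =>
    intro T W g hcard hK hTW hg
    have hne : ∃ q, (W q).Nonempty := by
      by_contra h
      push_neg at h
      have : ∀ q, W q = ∅ := fun q => h q
      simp [this] at hcard
    obtain ⟨q, hq⟩ := hne
    obtain ⟨i, hi⟩ := hq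
    classical
    set W' : Fin k → Finset (Fin n) := Function.update W q ((W q).erase i) with hW'
    have hW'sub : ∀ p, W' p ⊆ W p := by
      intro p
      rcases eq_or_ne p q with rfl | hp
      · simp [hW', Finset.erase_subset]
      · simp [hW', Function.update_of_ne hp]
    have hiT : ∀ p, i ∉ T p := fun p h => Finset.disjoint_left.1 (hTW p q) h hi
    have hiW : ∀ p, p ≠ q → i ∉ W p := by
      intro p hp h
      have := hK p q hp
      simp only [Finset.disjoint_union_left, Finset.disjoint_union_right] at this
      exact Finset.disjoint_left.1 this.2.2 h hi
    have hiW' : ∀ p, i ∉ W' p := by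
      intro p
      rcases eq_or_ne p q with rfl | hp
      · simp [hW']
      · simp only [hW', Function.update_of_ne hp]; exact hiW p hp
    have hsplitW : ∑ p, (W p).card =
        (W q).card + ∑ p ∈ Finset.univ.erase q, (W p).card :=
      (Finset.add_sum_erase _ _ (Finset.mem_univ q)).symm
    have hsplitW' : ∑ p, (W' p).card =
        (W' q).card + ∑ p ∈ Finset.univ.erase q, (W' p).card :=
      (Finset.add_sum_erase _ _ (Finset.mem_univ q)).symm
    have herase_eq : ∑ p ∈ Finset.univ.erase q, (W' p).card =
        ∑ p ∈ Finset.univ.erase q, (W p).card := by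
      apply Finset.sum_congr rfl
      intro p hp
      rw [hW', Function.update_of_ne (Finset.mem_erase.1 hp).1]
    have hcard' : (∑ p, (W' p).card) = m := by
      have hW'q : (W' q).card = (W q).card - 1 := by
        rw [hW', Function.update_self, Finset.card_erase_of_mem hi]
      have hq1 : 1 ≤ (W q).card := Finset.card_pos.2 ⟨i, hi⟩
      omega
    have hTW'union : (fun p => T p ∪ W p) =
        Function.update (fun p => T p ∪ W' p) q (insert i (T q ∪ W' q)) := by
      funext p
      rcases eq_or_ne p q with rfl | hp
      · rw [Function.update_self, hW', Function.update_self]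
        rw [← Finset.union_insert, Finset.insert_erase hi]
      · rw [Function.update_of_ne hp, hW', Function.update_of_ne hp]
    have hK' : IsKSet (fun p => T p ∪ W' p) :=
      isKSet_of_subset hK (fun p => Finset.union_subset_union_right (hW'sub p))
    have hmarg : kMarginal f q i (fun p => T p ∪ W' p) ≤ g q i := by
      apply hg q i hi _ hK'
      · intro p; exact Finset.subset_union_left
      · intro p; exact Finset.union_subset_union_right (hW'sub p)
      · intro p
        simp only [Finset.mem_union]
        rintro (h | h); exact hiT p h; exact hiW' p h
    have heq : f (fun p => T p ∪ W p) =
        f (fun p => T p ∪ W' p) + kMarginal f q i (fun p => T p ∪ W' p) := by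
      rw [kMarginal]
      have : Function.update (fun p => T p ∪ W' p) q
          (insert i ((fun p => T p ∪ W' p) q)) = (fun p => T p ∪ W p) := by
        rw [hTW'union]
      rw [this]; ring
    have hIH := ih T W' g hcard' hK'
      (fun p r => Finset.disjoint_of_subset_right (hW'sub r) (hTW p r))
      (fun r j hj Z hZ h1 h2 h3 => hg r j (hW'sub r hj) Z hZ h1
        (fun p => (h2 p).trans (Finset.union_subset_union_right (hW'sub p))) h3)
    have hsum : ∑ p, ∑ j ∈ W' p, g p j + g q i = ∑ p, ∑ j ∈ W p, g p j := by
      have h1 : ∑ p, ∑ j ∈ W p, g p j =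
          (∑ j ∈ W q, g q j) + ∑ p ∈ Finset.univ.erase q, ∑ j ∈ W p, g p j :=
        (Finset.add_sum_erase _ _ (Finset.mem_univ q)).symm
      have h2 : ∑ p, ∑ j ∈ W' p, g p j =
          (∑ j ∈ W' q, g q j) + ∑ p ∈ Finset.univ.erase q, ∑ j ∈ W' p, g p j :=
        (Finset.add_sum_erase _ _ (Finset.mem_univ q)).symm
      have h3 : ∑ p ∈ Finset.univ.erase q, ∑ j ∈ W' p, g p j =
          ∑ p ∈ Finset.univ.erase q, ∑ j ∈ W p, g p j := by
        apply Finset.sum_congr rfl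
        intro p hp
        rw [hW', Function.update_of_ne (Finset.mem_erase.1 hp).1]
      have h4 : ∑ j ∈ W' q, g q j + g q i = ∑ j ∈ W q, g q j := by
        rw [hW', Function.update_self, add_comm, Finset.add_sum_erase _ _ hi]
      linarith
    linarith [hIH, hmarg, heq, hsum]

/-- Removing elements one at a time, each bounded below by `kXi`. -/
lemma kRemove_le {n k : ℕ} {f : (Fin k → Finset (Fin n)) → ℝ}
    (hf : KSubmodular f) (hk : 0 < k) :
    ∀ (m : ℕ) (T R : Fin k → Finset (Fin n)),
    (∑ q, (R q).card) = m → IsKSet T → (∀ q, R q ⊆ T q) →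
    f (fun q => T q \ R q) ≤ f T - ∑ q, ∑ i ∈ R q, kXi f i q := by
  intro m
  induction m with
  | zero =>
    intro T R hcard _ _
    have hR : ∀ q, R q = ∅ := fun q =>
      Finset.card_eq_zero.1 (Finset.sum_eq_zero_iff.1 hcard q (Finset.mem_univ q))
    have : (fun q => T q \ R q) = T := by funext q; rw [hR q, Finset.sdiff_empty]
    rw [this]
    simp [hR]
  | succ m ih =>
    intro T R hcard hT hRT
    classical
    have hne : ∃ q, (R q).Nonempty := by
      by_contra h
      push_neg at h
      have : ∀ q, R q = ∅ := fun q => h q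
      simp [this] at hcard
    obtain ⟨q, hq⟩ := hne
    obtain ⟨i, hi⟩ := hq
    have hiT : i ∈ T q := hRT q hi
    set T' : Fin k → Finset (Fin n) := Function.update T q ((T q).erase i) with hT'
    set R' : Fin k → Finset (Fin n) := Function.update R q ((R q).erase i) with hR'
    have hT'sub : ∀ p, T' p ⊆ T p := by
      intro p
      rcases eq_or_ne p q with rfl | hp
      · simp [hT', Finset.erase_subset]
      · simp [hT', Function.update_of_ne hp]
    have hT'k : IsKSet T' := isKSet_of_subset hT hT'sub
    have hiT' : ∀ p, i ∉ T' p := by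
      intro p
      rcases eq_or_ne p q with rfl | hp
      · simp [hT']
      · simp only [hT', Function.update_of_ne hp]
        exact fun h => Finset.disjoint_left.1 (hT p q hp) h hiT
    have hmarg : kXi f i q ≤ kMarginal f q i T' := kXi_le hf hk hT'k hiT' q
    have hTeq : T = Function.update T' q (insert i (T' q)) := by
      funext p
      rcases eq_or_ne p q with rfl | hp
      · rw [Function.update_self, hT', Function.update_self, Finset.insert_erase hiT]
      · rw [Function.update_of_ne hp, hT', Function.update_of_ne hp]
    have hfT : f T = f T' + kMarginal f q i T' := by
      rw [kMarginal, ← hTeq]; ring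
    have hRT' : ∀ p, R' p ⊆ T' p := by
      intro p
      rcases eq_or_ne p q with rfl | hp
      · simp only [hR', hT', Function.update_self]
        exact Finset.erase_subset_erase i (hRT p)
      · simp only [hR', hT', Function.update_of_ne hp]
        exact hRT p
    have hcard' : (∑ p, (R' p).card) = m := by
      have h1 : ∑ p, (R p).card =
          (R q).card + ∑ p ∈ Finset.univ.erase q, (R p).card :=
        (Finset.add_sum_erase _ _ (Finset.mem_univ q)).symm
      have h2 : ∑ p, (R' p).card =
          (R' q).card + ∑ p ∈ Finset.univ.erase q, (R' p).card :=
        (Finset.add_sum_erase _ _ (Finset.mem_univ q)).symm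
      have h3 : ∑ p ∈ Finset.univ.erase q, (R' p).card =
          ∑ p ∈ Finset.univ.erase q, (R p).card := by
        apply Finset.sum_congr rfl
        intro p hp
        rw [hR', Function.update_of_ne (Finset.mem_erase.1 hp).1]
      have h4 : (R' q).card = (R q).card - 1 := by
        rw [hR', Function.update_self, Finset.card_erase_of_mem hi]
      have hq1 : 1 ≤ (R q).card := Finset.card_pos.2 ⟨i, hi⟩
      omega
    have hsd : (fun p => T' p \ R' p) = (fun p => T p \ R p) := by
      funext p
      rcases eq_or_ne p q with rfl | hp
      · simp only [hT', hR', Function.update_self]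
        ext j
        simp only [Finset.mem_sdiff, Finset.mem_erase]
        constructor
        · rintro ⟨⟨hji, hjT⟩, hjR⟩
          exact ⟨hjT, fun hjRq => hjR ⟨hji, hjRq⟩⟩
        · rintro ⟨hjT, hjR⟩
          have hji : j ≠ i := by rintro rfl; exact hjR hi
          exact ⟨⟨hji, hjT⟩, fun h => hjR h.2⟩
      · simp only [hT', hR', Function.update_of_ne hp]
    have hIH := ih T' R' hcard' hT'k hRT'
    rw [hsd] at hIH
    have hsum : ∑ p, ∑ j ∈ R' p, kXi f j p + kXi f i q = ∑ p, ∑ j ∈ R p, kXi f j p := by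
      have h1 : ∑ p, ∑ j ∈ R p, kXi f j p =
          (∑ j ∈ R q, kXi f j q) + ∑ p ∈ Finset.univ.erase q, ∑ j ∈ R p, kXi f j p :=
        (Finset.add_sum_erase _ _ (Finset.mem_univ q)).symm
      have h2 : ∑ p, ∑ j ∈ R' p, kXi f j p =
          (∑ j ∈ R' q, kXi f j q) + ∑ p ∈ Finset.univ.erase q, ∑ j ∈ R' p, kXi f j p :=
        (Finset.add_sum_erase _ _ (Finset.mem_univ q)).symm
      have h3 : ∑ p ∈ Finset.univ.erase q, ∑ j ∈ R' p, kXi f j p =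
          ∑ p ∈ Finset.univ.erase q, ∑ j ∈ R p, kXi f j p := by
        apply Finset.sum_congr rfl
        intro p hp
        rw [hR', Function.update_of_ne (Finset.mem_erase.1 hp).1]
      have h4 : ∑ j ∈ R' q, kXi f j q + kXi f i q = ∑ j ∈ R q, kXi f j q := by
        rw [hR', Function.update_self, add_comm]
        exact Finset.add_sum_erase _ (fun j => kXi f j q) hi
      linarith
    linarith

lemma kValid {n k : ℕ} {f : (Fin k → Finset (Fin n)) → ℝ}
    (hf : KSubmodular f) (hk : 0 < k)
    {S X : Fin k → Finset (Fin n)} (hS : IsKSet S) (hX : IsKSet X) :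
    f X ≤ kSubIneqRHS f S X := by
  classical
  set B : Finset (Fin n) := Finset.univ.biUnion S with hB
  have hmemB : ∀ {j : Fin n} {p : Fin k}, j ∈ S p → j ∈ B := by
    intro j p h; rw [hB]; exact Finset.mem_biUnion.2 ⟨p, Finset.mem_univ p, h⟩
  set W1 : Fin k → Finset (Fin n) := fun q => X q \ B with hW1
  set T1 : Fin k → Finset (Fin n) := fun q => S q ∪ W1 q with hT1
  have hW1B : ∀ q, Disjoint (W1 q) B := by
    intro q
    refine Finset.disjoint_left.2 fun a ha hab => ?_
    exact (Finset.mem_sdiff.1 ha).2 hab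
  have hSW1 : ∀ p q, Disjoint (S p) (W1 q) :=
    fun p q => (Finset.disjoint_of_subset_right (fun a ha => hmemB ha) (hW1B q)).symm
  have hT1k : IsKSet T1 := by
    intro p q hpq
    simp only [hT1, Finset.disjoint_union_left, Finset.disjoint_union_right]
    refine ⟨⟨hS p q hpq, (hSW1 q p).symm⟩, hSW1 p q, ?_⟩
    exact Finset.disjoint_of_subset_left (Finset.sdiff_subset)
      (Finset.disjoint_of_subset_right (Finset.sdiff_subset) (hX p q hpq))
  -- Phase 1
  have step1 : f T1 ≤ f S + ∑ q, ∑ i ∈ W1 q, kMarginal f q i S := by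
    apply kAdd_le (∑ q, (W1 q).card) S W1 (fun q i => kMarginal f q i S) rfl hT1k hSW1
    intro q i _ Z hZ h1 _ h3
    exact kMarginal_antitone hf hZ h1 h3 q
  -- Phase 2
  set R : Fin k → Finset (Fin n) := fun q => S q \ X q with hR
  set T2 : Fin k → Finset (Fin n) := fun q => T1 q \ R q with hT2
  have step2 : f T2 ≤ f T1 - ∑ q, ∑ i ∈ R q, kXi f i q := by
    apply kRemove_le hf hk (∑ q, (R q).card) T1 R rfl hT1k
    intro q
    exact (Finset.sdiff_subset).trans Finset.subset_union_left
  -- Phase 3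
  set M : Fin k → Finset (Fin n) :=
    fun q => ((Finset.univ.erase q).biUnion S) ∩ X q with hM
  have hT2X : ∀ q, T2 q ⊆ X q := by
    intro q j hj
    simp only [hT2, hT1, hW1, hR, Finset.mem_sdiff, Finset.mem_union] at hj
    obtain ⟨h1, h2⟩ := hj
    rcases h1 with h | h
    · by_contra hjX; exact h2 ⟨h, hjX⟩
    · exact h.1
  have hT2M : ∀ p q, Disjoint (T2 p) (M q) := by
    intro p q
    rcases eq_or_ne p q with rfl | hpq
    · refine Finset.disjoint_left.2 fun j hj hjM => ?_
      simp only [hM, Finset.mem_inter, Finset.mem_biUnion, Finset.mem_erase] at hjM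
      obtain ⟨⟨r, ⟨hrq, _⟩, hjr⟩, _⟩ := hjM
      have hjB : j ∈ B := hmemB hjr
      have hjSq : j ∉ S p := fun h => Finset.disjoint_left.1 (hS r p (by
        rintro rfl; exact hrq rfl)) hjr h
      simp only [hT2, hT1, hW1, hR, Finset.mem_sdiff, Finset.mem_union] at hj
      rcases hj.1 with h | h
      · exact hjSq h
      · exact h.2 hjB
    · exact Finset.disjoint_of_subset_left (hT2X p)
        (Finset.disjoint_of_subset_right (Finset.inter_subset_right) (hX p q hpq))
  have hT2MX : (fun q => T2 q ∪ M q) = X := by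
    funext q
    ext j
    simp only [hT2, hT1, hW1, hR, hM, Finset.mem_union, Finset.mem_sdiff,
      Finset.mem_inter, Finset.mem_biUnion, Finset.mem_erase]
    constructor
    · rintro (⟨h1, h2⟩ | ⟨_, h⟩)
      · rcases h1 with h | h
        · by_contra hjX; exact h2 ⟨h, hjX⟩
        · exact h.1
      · exact h
    · intro hjX
      by_cases hjSq : j ∈ S q
      · exact Or.inl ⟨Or.inl hjSq, fun h => h.2 hjX⟩
      · by_cases hjB : j ∈ B
        · refine Or.inr ⟨?_, hjX⟩
          rw [hB] at hjB
          obtain ⟨p, _, hjp⟩ := Finset.mem_biUnion.1 hjB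
          refine ⟨p, ⟨?_, Finset.mem_univ p⟩, hjp⟩
          rintro rfl; exact hjSq hjp
        · exact Or.inl ⟨Or.inr ⟨hjX, hjB⟩, fun h => h.2 hjX⟩
  have hT2k : IsKSet T2 := isKSet_of_subset hX hT2X
  have step3 : f X ≤ f T2 + ∑ q, ∑ i ∈ M q, kMarginal f q i (fun _ => ∅) := by
    have := kAdd_le (∑ q, (M q).card) T2 M
      (fun q i => kMarginal f q i (fun _ => ∅)) rfl (by rw [hT2MX]; exact hX) hT2M
      (fun q i _ Z hZ _ _ h3 =>
        kMarginal_antitone hf hZ (fun p => Finset.empty_subset _) h3 q)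
    rwa [hT2MX] at this
  -- rewrite the RHS sums
  have hA : ∀ q : Fin k, ∑ i ∈ Finset.univ \ B,
      kMarginal f q i S * (if i ∈ X q then 1 else 0) = ∑ i ∈ W1 q, kMarginal f q i S := by
    intro q
    have h1 : ∀ i : Fin n, kMarginal f q i S * (if i ∈ X q then 1 else 0) =
        if i ∈ X q then kMarginal f q i S else 0 := by
      intro i; split <;> ring
    rw [Finset.sum_congr rfl fun i _ => h1 i, ← Finset.sum_filter]
    congr 1
    ext j
    simp only [hW1, Finset.mem_filter, Finset.mem_sdiff, Finset.mem_univ, true_and]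
    tauto
  have hC : ∀ q : Fin k, ∑ i ∈ S q, kXi f i q * (1 - (if i ∈ X q then 1 else 0)) =
      ∑ i ∈ R q, kXi f i q := by
    intro q
    have h1 : ∀ i : Fin n, kXi f i q * (1 - (if i ∈ X q then 1 else 0)) =
        if i ∉ X q then kXi f i q else 0 := by
      intro i
      by_cases h : i ∈ X q <;> simp [h]
    rw [Finset.sum_congr rfl fun i _ => h1 i, ← Finset.sum_filter]
    have h2 : R q = Finset.filter (fun a => a ∉ X q) (S q) := by
      ext j
      simp [hR, Finset.mem_sdiff, Finset.mem_filter]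
    rw [h2]
  have hBterm : ∀ q : Fin k, ∑ p ∈ Finset.univ.erase q, ∑ i ∈ S p,
      kMarginal f q i (fun _ => ∅) * (if i ∈ X q then 1 else 0) =
      ∑ i ∈ M q, kMarginal f q i (fun _ => ∅) := by
    intro q
    have h1 : ∀ p, ∑ i ∈ S p,
        kMarginal f q i (fun _ => ∅) * (if i ∈ X q then 1 else 0) =
        ∑ i ∈ S p ∩ X q, kMarginal f q i (fun _ => ∅) := by
      intro p
      have h2 : ∀ i : Fin n, kMarginal f q i (fun _ => ∅) * (if i ∈ X q then 1 else 0) =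
          if i ∈ X q then kMarginal f q i (fun _ => ∅) else 0 := by
        intro i; split <;> ring
      have h3 : S p ∩ X q = Finset.filter (fun a => a ∈ X q) (S p) := by
        ext j; simp [Finset.mem_filter]
      rw [Finset.sum_congr rfl fun i _ => h2 i, ← Finset.sum_filter, h3]
    rw [Finset.sum_congr rfl fun p _ => h1 p]
    have hM' : M q = (Finset.univ.erase q).biUnion (fun p => S p ∩ X q) := by
      rw [hM]
      ext j
      simp only [Finset.mem_inter, Finset.mem_biUnion, Finset.mem_erase]
      tauto
    rw [hM', Finset.sum_biUnion]
    intro p hp r hr hpr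
    exact Finset.disjoint_of_subset_left Finset.inter_subset_left
      (Finset.disjoint_of_subset_right Finset.inter_subset_left (hS p r hpr))
  rw [kSubIneqRHS]
  rw [Finset.sum_congr rfl fun q _ => hA q, Finset.sum_congr rfl fun q _ => hC q,
    Finset.sum_congr rfl fun q _ => hBterm q]
  linarith [step1, step2, step3]

lemma kRHS_self {n k : ℕ} (f : (Fin k → Finset (Fin n)) → ℝ)
    {X : Fin k → Finset (Fin n)} (hX : IsKSet X) :
    kSubIneqRHS f X X = f X := by
  rw [kSubIneqRHS]
  have hA : ∀ q : Fin k, ∑ i ∈ Finset.univ \ Finset.univ.biUnion X,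
      kMarginal f q i X * (if i ∈ X q then 1 else 0) = 0 := by
    intro q
    apply Finset.sum_eq_zero
    intro i hi
    have : i ∉ X q := fun h => (Finset.mem_sdiff.1 hi).2
      (Finset.mem_biUnion.2 ⟨q, Finset.mem_univ q, h⟩)
    rw [if_neg this, mul_zero]
  have hB : ∀ q : Fin k, ∑ p ∈ Finset.univ.erase q, ∑ i ∈ X p,
      kMarginal f q i (fun _ => ∅) * (if i ∈ X q then 1 else 0) = 0 := by
    intro q
    apply Finset.sum_eq_zero
    intro p hp
    apply Finset.sum_eq_zero
    intro i hi
    have : i ∉ X q :=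
      fun h => Finset.disjoint_left.1 (hX p q (Finset.mem_erase.1 hp).1) hi h
    rw [if_neg this, mul_zero]
  have hC : ∀ q : Fin k, ∑ i ∈ X q, kXi f i q * (1 - (if i ∈ X q then 1 else 0)) = 0 := by
    intro q
    apply Finset.sum_eq_zero
    intro i hi
    rw [if_pos hi]
    ring
  rw [Finset.sum_congr rfl fun q _ => hA q, Finset.sum_congr rfl fun q _ => hB q,
    Finset.sum_congr rfl fun q _ => hC q]
  simp

/-- For a `k`-submodular `f` with `f(∅,…,∅) = 0` and any `k`-set `X` with binary
encoding `x`: `w ≤ f(X)` iff `w` satisfies the `k`-submodular inequality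
associated with every `k`-set `S`; in particular the minimum over `S` of the
right-hand side equals `f(X)`, attained at `S = X`. -/
theorem kSubmodular_inequalities_exact {n k : ℕ} (hn : 0 < n) (hk : 0 < k)
    (f : (Fin k → Finset (Fin n)) → ℝ) (hf : KSubmodular f)
    (h0 : f (fun _ => ∅) = 0)
    (X : Fin k → Finset (Fin n)) (hX : IsKSet X) (w : ℝ) :
    (w ≤ f X ↔ ∀ S : Fin k → Finset (Fin n), IsKSet S → w ≤ kSubIneqRHS f S X) ∧
      kSubIneqRHS f X X = f X := by
  refine ⟨⟨fun hw S hS => hw.trans (kValid hf hk hS hX), fun h => ?_⟩, kRHS_self f hX⟩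
  have := h X hX
  rwa [kRHS_self f hX] at this
end

section
/- Let f : 3^N → ℝ be bisubmodular with f(∅,∅) = 0. For any permutation δ = (δ_1,…,δ_n) of N and any σ ∈ {±1}^n, let π ∈ ℝ^n be the output of the signed greedy procedure: starting from S_1 = S_2 = ∅, for i = 1,…,n, if σ_{δ_i} = 1 set π_{δ_i} = f(S_1∪{δ_i}, S_2) − f(S_1, S_2) and add δ_i to S_1, otherwise set π_{δ_i} = −f(S_1, S_2∪{δ_i}) + f(S_1, S_2) and add δ_i to S_2. Then the extremal poly-bimatroid inequality w ≥ π^⊤x is valid for the epigraph of f: for every (S_1, S_2) ∈ 3^N with ternary encoding x ∈ {0,±1}^n, f(S_1, S_2) ≥ π^⊤ x. -/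
open scoped Classical

/-- `f : 3^N → ℝ` (defined on ordered pairs of disjoint subsets of `N`) is
bisubmodular if `f(X) + f(Y) ≥ f(X ⊓ Y) + f(X ⊔ Y)` for all bisets `X, Y`,
where `X ⊓ Y = (X_1∩Y_1, X_2∩Y_2)` and
`X ⊔ Y = ((X_1∪Y_1)\(X_2∪Y_2), (X_2∪Y_2)\(X_1∪Y_1))`. -/
def Bisubmodular {n : ℕ} (f : Finset (Fin n) → Finset (Fin n) → ℝ) : Prop :=
  ∀ X1 X2 Y1 Y2 : Finset (Fin n), Disjoint X1 X2 → Disjoint Y1 Y2 →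
    f (X1 ∩ Y1) (X2 ∩ Y2) +
        f ((X1 ∪ Y1) \ (X2 ∪ Y2)) ((X2 ∪ Y2) \ (X1 ∪ Y1)) ≤
      f X1 X2 + f Y1 Y2

/-- First component built by the signed greedy procedure before processing
position `i`: the elements `δ_l` with `l < i` and sign `+1`. -/
noncomputable def sgFirst {n : ℕ} (δ : Equiv.Perm (Fin n)) (σ : Fin n → ℝ)
    (i : Fin n) : Finset (Fin n) :=
  (Finset.univ.filter (fun l : Fin n => l < i ∧ σ (δ l) = 1)).image δ

/-- Second component built by the signed greedy procedure before processing
position `i`: the elements `δ_l` with `l < i` and sign `−1`. -/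
noncomputable def sgSecond {n : ℕ} (δ : Equiv.Perm (Fin n)) (σ : Fin n → ℝ)
    (i : Fin n) : Finset (Fin n) :=
  (Finset.univ.filter (fun l : Fin n => l < i ∧ σ (δ l) ≠ 1)).image δ

/-- The coefficient vector `π` output by the signed greedy procedure for a
permutation `δ` and a sign vector `σ ∈ {±1}^n`. -/
noncomputable def signedGreedy {n : ℕ} (f : Finset (Fin n) → Finset (Fin n) → ℝ)
    (δ : Equiv.Perm (Fin n)) (σ : Fin n → ℝ) : Fin n → ℝ :=
  fun j =>
    if σ j = 1 then
      f (insert j (sgFirst δ σ (δ.symm j))) (sgSecond δ σ (δ.symm j)) -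
        f (sgFirst δ σ (δ.symm j)) (sgSecond δ σ (δ.symm j))
    else
      -f (sgFirst δ σ (δ.symm j)) (insert j (sgSecond δ σ (δ.symm j))) +
        f (sgFirst δ σ (δ.symm j)) (sgSecond δ σ (δ.symm j))

noncomputable def gA {n : ℕ} (δ : Equiv.Perm (Fin n)) (σ : Fin n → ℝ) (k : ℕ) : Finset (Fin n) :=
  (Finset.univ.filter (fun l : Fin n => (l : ℕ) < k ∧ σ (δ l) = 1)).image δ
noncomputable def gB {n : ℕ} (δ : Equiv.Perm (Fin n)) (σ : Fin n → ℝ) (k : ℕ) : Finset (Fin n) :=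
  (Finset.univ.filter (fun l : Fin n => (l : ℕ) < k ∧ σ (δ l) ≠ 1)).image δ

variable {n : ℕ} (δ : Equiv.Perm (Fin n)) (σ : Fin n → ℝ)

lemma mem_gA {k : ℕ} {j : Fin n} : j ∈ gA δ σ k ↔ ((δ.symm j : ℕ) < k ∧ σ j = 1) := by
  simp only [gA, Finset.mem_image, Finset.mem_filter, Finset.mem_univ, true_and]
  constructor
  · rintro ⟨l, ⟨hl, hs⟩, rfl⟩; simpa using ⟨hl, hs⟩
  · rintro ⟨h1, h2⟩; exact ⟨δ.symm j, ⟨h1, by simpa using h2⟩, by simp⟩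

lemma mem_gB {k : ℕ} {j : Fin n} : j ∈ gB δ σ k ↔ ((δ.symm j : ℕ) < k ∧ σ j ≠ 1) := by
  simp only [gB, Finset.mem_image, Finset.mem_filter, Finset.mem_univ, true_and]
  constructor
  · rintro ⟨l, ⟨hl, hs⟩, rfl⟩; simpa using ⟨hl, hs⟩
  · rintro ⟨h1, h2⟩; exact ⟨δ.symm j, ⟨h1, by simpa using h2⟩, by simp⟩

lemma sgFirst_eq (i : Fin n) : sgFirst δ σ i = gA δ σ (i : ℕ) := by
  rfl

lemma sgSecond_eq (i : Fin n) : sgSecond δ σ i = gB δ σ (i : ℕ) := by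
  rfl

lemma gA_zero : gA δ σ 0 = ∅ := by simp [gA]
lemma gB_zero : gB δ σ 0 = ∅ := by simp [gB]

lemma disj_gA_gB (k : ℕ) : Disjoint (gA δ σ k) (gB δ σ k) := by
  rw [Finset.disjoint_left]
  intro j h1 h2
  exact ((mem_gB δ σ).mp h2).2 ((mem_gA δ σ).mp h1).2

lemma disj_T_gA {k : ℕ} {T : Finset (Fin n)} (h : ∀ j ∈ T, k ≤ (δ.symm j : ℕ)) :
    Disjoint T (gA δ σ k) := by
  rw [Finset.disjoint_left]
  intro j hj hj'
  exact absurd ((mem_gA δ σ).mp hj').1 (not_lt.mpr (h j hj))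

lemma disj_T_gB {k : ℕ} {T : Finset (Fin n)} (h : ∀ j ∈ T, k ≤ (δ.symm j : ℕ)) :
    Disjoint T (gB δ σ k) := by
  rw [Finset.disjoint_left]
  intro j hj hj'
  exact absurd ((mem_gB δ σ).mp hj').1 (not_lt.mpr (h j hj))

lemma gA_succ_pos {k : ℕ} (hkn : k < n) (hσe : σ (δ ⟨k, hkn⟩) = 1) :
    gA δ σ (k + 1) = insert (δ ⟨k, hkn⟩) (gA δ σ k) := by
  ext j
  simp only [mem_gA, Finset.mem_insert]
  constructor
  · rintro ⟨hlt, hs⟩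
    rcases lt_or_eq_of_le (Nat.lt_succ_iff.mp hlt) with h | h
    · exact Or.inr ⟨h, hs⟩
    · left
      have hje : δ.symm j = ⟨k, hkn⟩ := Fin.ext h
      rw [← hje]; simp
  · rintro (rfl | ⟨h1, h2⟩)
    · exact ⟨by simp, hσe⟩
    · exact ⟨Nat.lt_succ_of_lt h1, h2⟩

lemma gB_succ_pos {k : ℕ} (hkn : k < n) (hσe : σ (δ ⟨k, hkn⟩) = 1) :
    gB δ σ (k + 1) = gB δ σ k := by
  ext j
  simp only [mem_gB]
  constructor
  · rintro ⟨hlt, hs⟩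
    rcases lt_or_eq_of_le (Nat.lt_succ_iff.mp hlt) with h | h
    · exact ⟨h, hs⟩
    · exfalso
      have hje : δ.symm j = ⟨k, hkn⟩ := Fin.ext h
      apply hs
      rw [← hje] at hσe; simpa using hσe
  · rintro ⟨h1, h2⟩
    exact ⟨Nat.lt_succ_of_lt h1, h2⟩

lemma gA_succ_neg {k : ℕ} (hkn : k < n) (hσe : ¬ σ (δ ⟨k, hkn⟩) = 1) :
    gA δ σ (k + 1) = gA δ σ k := by
  ext j
  simp only [mem_gA]
  constructor
  · rintro ⟨hlt, hs⟩
    rcases lt_or_eq_of_le (Nat.lt_succ_iff.mp hlt) with h | h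
    · exact ⟨h, hs⟩
    · exfalso
      have hje : δ.symm j = ⟨k, hkn⟩ := Fin.ext h
      apply hσe
      rw [← hje]; simpa using hs
  · rintro ⟨h1, h2⟩
    exact ⟨Nat.lt_succ_of_lt h1, h2⟩

lemma gB_succ_neg {k : ℕ} (hkn : k < n) (hσe : ¬ σ (δ ⟨k, hkn⟩) = 1) :
    gB δ σ (k + 1) = insert (δ ⟨k, hkn⟩) (gB δ σ k) := by
  ext j
  simp only [mem_gB, Finset.mem_insert]
  constructor
  · rintro ⟨hlt, hs⟩
    rcases lt_or_eq_of_le (Nat.lt_succ_iff.mp hlt) with h | h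
    · exact Or.inr ⟨h, hs⟩
    · left
      have hje : δ.symm j = ⟨k, hkn⟩ := Fin.ext h
      rw [← hje]; simp
  · rintro (rfl | ⟨h1, h2⟩)
    · exact ⟨by simp, hσe⟩
    · exact ⟨Nat.lt_succ_of_lt h1, h2⟩

lemma notMem_gA {k : ℕ} (hkn : k < n) : δ ⟨k, hkn⟩ ∉ gA δ σ k := by
  intro h
  have := ((mem_gA δ σ).mp h).1
  simp at this

lemma notMem_gB {k : ℕ} (hkn : k < n) : δ ⟨k, hkn⟩ ∉ gB δ σ k := by
  intro h
  have := ((mem_gB δ σ).mp h).1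
  simp at this

-- helper set-algebra lemma
lemma helper_inter {α : Type*} [DecidableEq α] {T A : Finset α} {e : α}
    (hT : Disjoint T A) (he : e ∉ T) : (T ∪ A) ∩ insert e A = A := by
  ext j
  simp only [Finset.mem_inter, Finset.mem_union, Finset.mem_insert]
  constructor
  · rintro ⟨h1, h2⟩
    rcases h2 with rfl | h2
    · rcases h1 with h | h
      · exact absurd h he
      · exact h
    · exact h2
  · intro h
    exact ⟨Or.inr h, Or.inr h⟩

lemma key {n : ℕ} (f : Finset (Fin n) → Finset (Fin n) → ℝ) (hf : Bisubmodular f)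
    (δ : Equiv.Perm (Fin n)) (σ : Fin n → ℝ) :
    ∀ (m k : ℕ), k + m = n → ∀ T1 T2 : Finset (Fin n), Disjoint T1 T2 →
      (∀ j ∈ T1, k ≤ (δ.symm j : ℕ)) → (∀ j ∈ T2, k ≤ (δ.symm j : ℕ)) →
      (∑ j ∈ T1, signedGreedy f δ σ j) - (∑ j ∈ T2, signedGreedy f δ σ j)
        ≤ f (T1 ∪ gA δ σ k) (T2 ∪ gB δ σ k) - f (gA δ σ k) (gB δ σ k) := by
  intro m
  induction m with
  | zero =>
    intro k hk T1 T2 _ h1 h2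
    have hT1 : T1 = ∅ := Finset.eq_empty_of_forall_notMem fun j hj => by
      have := h1 j hj; have := (δ.symm j).isLt; omega
    have hT2 : T2 = ∅ := Finset.eq_empty_of_forall_notMem fun j hj => by
      have := h2 j hj; have := (δ.symm j).isLt; omega
    subst hT1; subst hT2
    simp
  | succ m ih =>
    intro k hk T1 T2 hdisj h1 h2
    have hkn : k < n := by omega
    set e := δ ⟨k, hkn⟩ with he
    have hpose : (δ.symm e : ℕ) = k := by rw [he]; simp
    have hposeq : ∀ j : Fin n, (δ.symm j : ℕ) = k → j = e := by
      intro j hj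
      have hj' : δ.symm j = ⟨k, hkn⟩ := Fin.ext hj
      rw [he, ← hj']; simp
    have heA : e ∉ gA δ σ k := by rw [he]; exact notMem_gA δ σ hkn
    have heB : e ∉ gB δ σ k := by rw [he]; exact notMem_gB δ σ hkn
    have hT1A : Disjoint T1 (gA δ σ k) := disj_T_gA δ σ h1
    have hT1B : Disjoint T1 (gB δ σ k) := disj_T_gB δ σ h1
    have hT2A : Disjoint T2 (gA δ σ k) := disj_T_gA δ σ h2
    have hT2B : Disjoint T2 (gB δ σ k) := disj_T_gB δ σ h2
    have hAB : Disjoint (gA δ σ k) (gB δ σ k) := disj_gA_gB δ σ k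
    have hXdisj : Disjoint (T1 ∪ gA δ σ k) (T2 ∪ gB δ σ k) := by
      simp only [Finset.disjoint_union_left, Finset.disjoint_union_right]
      exact ⟨⟨hdisj, hT2A.symm⟩, ⟨hT1B, hAB⟩⟩
    have step : ∀ T : Finset (Fin n), (∀ j ∈ T, k ≤ (δ.symm j : ℕ)) → e ∉ T →
        ∀ j ∈ T, k + 1 ≤ (δ.symm j : ℕ) := by
      intro T hT heT j hj
      have hk' := hT j hj
      by_contra hlt
      have hjk : (δ.symm j : ℕ) = k := by omega
      exact heT ((hposeq j hjk) ▸ hj)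
    have hsg : signedGreedy f δ σ e =
        if σ e = 1 then
          f (insert e (gA δ σ k)) (gB δ σ k) - f (gA δ σ k) (gB δ σ k)
        else
          -f (gA δ σ k) (insert e (gB δ σ k)) + f (gA δ σ k) (gB δ σ k) := by
      have h1' : sgFirst δ σ (δ.symm e) = gA δ σ k := by rw [sgFirst_eq, hpose]
      have h2' : sgSecond δ σ (δ.symm e) = gB δ σ k := by rw [sgSecond_eq, hpose]
      simp only [signedGreedy, h1', h2']
    by_cases hσe : σ e = 1
    · -- sign +1
      have hσe' : σ (δ ⟨k, hkn⟩) = 1 := by rwa [← he]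
      have hA1 : gA δ σ (k + 1) = insert e (gA δ σ k) := by
        rw [he]; exact gA_succ_pos δ σ hkn hσe'
      have hB1 : gB δ σ (k + 1) = gB δ σ k := gB_succ_pos δ σ hkn hσe'
      rw [if_pos hσe] at hsg
      by_cases h1e : e ∈ T1
      · -- e ∈ T1 : pure telescoping
        have h2e : e ∉ T2 := Finset.disjoint_left.mp hdisj h1e
        have hIH := ih (k+1) (by omega) (T1.erase e) T2
          (hdisj.mono_left (Finset.erase_subset _ _))
          (step (T1.erase e) (fun j hj => h1 j (Finset.mem_erase.mp hj).2)
            (Finset.notMem_erase _ _))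
          (step T2 h2 h2e)
        rw [hA1, hB1] at hIH
        have hU : T1.erase e ∪ insert e (gA δ σ k) = T1 ∪ gA δ σ k := by
          rw [Finset.union_insert, ← Finset.insert_union, Finset.insert_erase h1e]
        rw [hU] at hIH
        have hS : signedGreedy f δ σ e + ∑ j ∈ T1.erase e, signedGreedy f δ σ j
            = ∑ j ∈ T1, signedGreedy f δ σ j := Finset.add_sum_erase _ _ h1e
        linarith
      · by_cases h2e : e ∈ T2
        · -- e ∈ T2 : two bisubmodularity applications
          have hIH := ih (k+1) (by omega) T1 (T2.erase e)
            (hdisj.mono_right (Finset.erase_subset _ _))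
            (step T1 h1 h1e)
            (step (T2.erase e) (fun j hj => h2 j (Finset.mem_erase.mp hj).2)
              (Finset.notMem_erase _ _))
          rw [hA1, hB1] at hIH
          have hS : signedGreedy f δ σ e + ∑ j ∈ T2.erase e, signedGreedy f δ σ j
              = ∑ j ∈ T2, signedGreedy f δ σ j := Finset.add_sum_erase _ _ h2e
          have hYdisj : Disjoint (insert e (gA δ σ k)) (gB δ σ k) :=
            Finset.disjoint_insert_left.mpr ⟨heB, hAB⟩
          have hX' : Disjoint (T1 ∪ gA δ σ k) (T2.erase e ∪ gB δ σ k) :=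
            hXdisj.mono_right (Finset.union_subset_union (Finset.erase_subset _ _) subset_rfl)
          have heT2B : e ∉ T2.erase e ∪ gB δ σ k := by
            simp [Finset.mem_union, heB]
          -- first application
          have hbis1 := hf (T1 ∪ gA δ σ k) (T2 ∪ gB δ σ k) (insert e (gA δ σ k)) (gB δ σ k)
            hXdisj hYdisj
          have m1 : (T1 ∪ gA δ σ k) ∩ insert e (gA δ σ k) = gA δ σ k := helper_inter hT1A h1e
          have m2 : (T2 ∪ gB δ σ k) ∩ gB δ σ k = gB δ σ k :=
            Finset.inter_eq_right.mpr Finset.subset_union_right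
          have j1 : ((T1 ∪ gA δ σ k) ∪ insert e (gA δ σ k)) \ ((T2 ∪ gB δ σ k) ∪ gB δ σ k)
              = T1 ∪ gA δ σ k := by
            rw [Finset.union_insert, Finset.union_assoc, Finset.union_self,
              Finset.union_assoc, Finset.union_self,
              Finset.insert_sdiff_of_mem _ (Finset.mem_union_left _ h2e),
              Finset.sdiff_eq_self_iff_disjoint.mpr hXdisj]
          have j2 : ((T2 ∪ gB δ σ k) ∪ gB δ σ k) \ ((T1 ∪ gA δ σ k) ∪ insert e (gA δ σ k))
              = T2.erase e ∪ gB δ σ k := by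
            rw [Finset.union_insert, Finset.union_assoc, Finset.union_self,
              Finset.union_assoc, Finset.union_self, Finset.sdiff_insert,
              Finset.sdiff_eq_self_iff_disjoint.mpr hXdisj.symm,
              Finset.erase_union_distrib, Finset.erase_eq_of_notMem heB]
          rw [m1, m2, j1, j2] at hbis1
          -- second application
          have hbis2 := hf (T1 ∪ gA δ σ k) (T2.erase e ∪ gB δ σ k)
            (insert e (gA δ σ k)) (gB δ σ k) hX' hYdisj
          have m2' : (T2.erase e ∪ gB δ σ k) ∩ gB δ σ k = gB δ σ k :=
            Finset.inter_eq_right.mpr Finset.subset_union_right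
          have j1' : ((T1 ∪ gA δ σ k) ∪ insert e (gA δ σ k))
              \ ((T2.erase e ∪ gB δ σ k) ∪ gB δ σ k) = T1 ∪ insert e (gA δ σ k) := by
            rw [Finset.union_insert, Finset.union_assoc, Finset.union_self,
              Finset.union_assoc, Finset.union_self,
              Finset.sdiff_eq_self_iff_disjoint.mpr
                (Finset.disjoint_insert_left.mpr ⟨heT2B, hX'⟩),
              Finset.union_insert]
          have j2' : ((T2.erase e ∪ gB δ σ k) ∪ gB δ σ k)
              \ ((T1 ∪ gA δ σ k) ∪ insert e (gA δ σ k)) = T2.erase e ∪ gB δ σ k := by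
            rw [Finset.union_insert, Finset.union_assoc, Finset.union_self,
              Finset.union_assoc, Finset.union_self,
              Finset.sdiff_eq_self_iff_disjoint.mpr
                (Finset.disjoint_insert_right.mpr ⟨heT2B, hX'.symm⟩)]
          rw [m1, m2', j1', j2'] at hbis2
          linarith
        · -- e ∉ T1 ∪ T2 : one bisubmodularity application
          have hIH := ih (k+1) (by omega) T1 T2 hdisj (step T1 h1 h1e) (step T2 h2 h2e)
          rw [hA1, hB1] at hIH
          have hYdisj : Disjoint (insert e (gA δ σ k)) (gB δ σ k) :=
            Finset.disjoint_insert_left.mpr ⟨heB, hAB⟩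
          have heT2B : e ∉ T2 ∪ gB δ σ k := by simp [Finset.mem_union, h2e, heB]
          have hbis := hf (T1 ∪ gA δ σ k) (T2 ∪ gB δ σ k) (insert e (gA δ σ k)) (gB δ σ k)
            hXdisj hYdisj
          have m1 : (T1 ∪ gA δ σ k) ∩ insert e (gA δ σ k) = gA δ σ k := helper_inter hT1A h1e
          have m2 : (T2 ∪ gB δ σ k) ∩ gB δ σ k = gB δ σ k :=
            Finset.inter_eq_right.mpr Finset.subset_union_right
          have j1 : ((T1 ∪ gA δ σ k) ∪ insert e (gA δ σ k)) \ ((T2 ∪ gB δ σ k) ∪ gB δ σ k)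
              = T1 ∪ insert e (gA δ σ k) := by
            rw [Finset.union_insert, Finset.union_assoc, Finset.union_self,
              Finset.union_assoc, Finset.union_self,
              Finset.sdiff_eq_self_iff_disjoint.mpr
                (Finset.disjoint_insert_left.mpr ⟨heT2B, hXdisj⟩),
              Finset.union_insert]
          have j2 : ((T2 ∪ gB δ σ k) ∪ gB δ σ k) \ ((T1 ∪ gA δ σ k) ∪ insert e (gA δ σ k))
              = T2 ∪ gB δ σ k := by
            rw [Finset.union_insert, Finset.union_assoc, Finset.union_self,
              Finset.union_assoc, Finset.union_self,
              Finset.sdiff_eq_self_iff_disjoint.mpr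
                (Finset.disjoint_insert_right.mpr ⟨heT2B, hXdisj.symm⟩)]
          rw [m1, m2, j1, j2] at hbis
          linarith
    · -- sign −1
      have hσe' : ¬ σ (δ ⟨k, hkn⟩) = 1 := by rwa [← he]
      have hA1 : gA δ σ (k + 1) = gA δ σ k := gA_succ_neg δ σ hkn hσe'
      have hB1 : gB δ σ (k + 1) = insert e (gB δ σ k) := by
        rw [he]; exact gB_succ_neg δ σ hkn hσe'
      rw [if_neg hσe] at hsg
      by_cases h2e : e ∈ T2
      · -- e ∈ T2 : pure telescoping
        have h1e : e ∉ T1 := Finset.disjoint_right.mp hdisj h2e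
        have hIH := ih (k+1) (by omega) T1 (T2.erase e)
          (hdisj.mono_right (Finset.erase_subset _ _))
          (step T1 h1 h1e)
          (step (T2.erase e) (fun j hj => h2 j (Finset.mem_erase.mp hj).2)
            (Finset.notMem_erase _ _))
        rw [hA1, hB1] at hIH
        have hU : T2.erase e ∪ insert e (gB δ σ k) = T2 ∪ gB δ σ k := by
          rw [Finset.union_insert, ← Finset.insert_union, Finset.insert_erase h2e]
        rw [hU] at hIH
        have hS : signedGreedy f δ σ e + ∑ j ∈ T2.erase e, signedGreedy f δ σ j
            = ∑ j ∈ T2, signedGreedy f δ σ j := Finset.add_sum_erase _ _ h2e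
        linarith
      · by_cases h1e : e ∈ T1
        · -- e ∈ T1 : two bisubmodularity applications
          have hIH := ih (k+1) (by omega) (T1.erase e) T2
            (hdisj.mono_left (Finset.erase_subset _ _))
            (step (T1.erase e) (fun j hj => h1 j (Finset.mem_erase.mp hj).2)
              (Finset.notMem_erase _ _))
            (step T2 h2 h2e)
          rw [hA1, hB1] at hIH
          have hS : signedGreedy f δ σ e + ∑ j ∈ T1.erase e, signedGreedy f δ σ j
              = ∑ j ∈ T1, signedGreedy f δ σ j := Finset.add_sum_erase _ _ h1e
          have hYdisj : Disjoint (gA δ σ k) (insert e (gB δ σ k)) :=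
            Finset.disjoint_insert_right.mpr ⟨heA, hAB⟩
          have hX' : Disjoint (T1.erase e ∪ gA δ σ k) (T2 ∪ gB δ σ k) :=
            hXdisj.mono_left (Finset.union_subset_union (Finset.erase_subset _ _) subset_rfl)
          have heT1A : e ∉ T1.erase e ∪ gA δ σ k := by
            simp [Finset.mem_union, heA]
          -- first application
          have hbis1 := hf (T1 ∪ gA δ σ k) (T2 ∪ gB δ σ k) (gA δ σ k) (insert e (gB δ σ k))
            hXdisj hYdisj
          have m1 : (T1 ∪ gA δ σ k) ∩ gA δ σ k = gA δ σ k :=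
            Finset.inter_eq_right.mpr Finset.subset_union_right
          have m2 : (T2 ∪ gB δ σ k) ∩ insert e (gB δ σ k) = gB δ σ k := helper_inter hT2B h2e
          have j1 : ((T1 ∪ gA δ σ k) ∪ gA δ σ k) \ ((T2 ∪ gB δ σ k) ∪ insert e (gB δ σ k))
              = T1.erase e ∪ gA δ σ k := by
            rw [Finset.union_insert, Finset.union_assoc, Finset.union_self,
              Finset.union_assoc, Finset.union_self, Finset.sdiff_insert,
              Finset.sdiff_eq_self_iff_disjoint.mpr hXdisj,
              Finset.erase_union_distrib, Finset.erase_eq_of_notMem heA]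
          have j2 : ((T2 ∪ gB δ σ k) ∪ insert e (gB δ σ k)) \ ((T1 ∪ gA δ σ k) ∪ gA δ σ k)
              = T2 ∪ gB δ σ k := by
            rw [Finset.union_insert, Finset.union_assoc, Finset.union_self,
              Finset.union_assoc, Finset.union_self,
              Finset.insert_sdiff_of_mem _ (Finset.mem_union_left _ h1e),
              Finset.sdiff_eq_self_iff_disjoint.mpr hXdisj.symm]
          rw [m1, m2, j1, j2] at hbis1
          -- second application
          have hbis2 := hf (T1.erase e ∪ gA δ σ k) (T2 ∪ gB δ σ k)
            (gA δ σ k) (insert e (gB δ σ k)) hX' hYdisj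
          have m1' : (T1.erase e ∪ gA δ σ k) ∩ gA δ σ k = gA δ σ k :=
            Finset.inter_eq_right.mpr Finset.subset_union_right
          have j1' : ((T1.erase e ∪ gA δ σ k) ∪ gA δ σ k)
              \ ((T2 ∪ gB δ σ k) ∪ insert e (gB δ σ k)) = T1.erase e ∪ gA δ σ k := by
            rw [Finset.union_insert, Finset.union_assoc, Finset.union_self,
              Finset.union_assoc, Finset.union_self,
              Finset.sdiff_eq_self_iff_disjoint.mpr
                (Finset.disjoint_insert_right.mpr ⟨heT1A, hX'⟩)]
          have j2' : ((T2 ∪ gB δ σ k) ∪ insert e (gB δ σ k))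
              \ ((T1.erase e ∪ gA δ σ k) ∪ gA δ σ k) = T2 ∪ insert e (gB δ σ k) := by
            rw [Finset.union_insert, Finset.union_assoc, Finset.union_self,
              Finset.union_assoc, Finset.union_self,
              Finset.sdiff_eq_self_iff_disjoint.mpr
                (Finset.disjoint_insert_left.mpr ⟨heT1A, hX'.symm⟩),
              Finset.union_insert]
          rw [m1', m2, j1', j2'] at hbis2
          linarith
        · -- e ∉ T1 ∪ T2 : one bisubmodularity application
          have hIH := ih (k+1) (by omega) T1 T2 hdisj (step T1 h1 h1e) (step T2 h2 h2e)
          rw [hA1, hB1] at hIH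
          have hYdisj : Disjoint (gA δ σ k) (insert e (gB δ σ k)) :=
            Finset.disjoint_insert_right.mpr ⟨heA, hAB⟩
          have heT1A : e ∉ T1 ∪ gA δ σ k := by simp [Finset.mem_union, h1e, heA]
          have hbis := hf (T1 ∪ gA δ σ k) (T2 ∪ gB δ σ k) (gA δ σ k) (insert e (gB δ σ k))
            hXdisj hYdisj
          have m1 : (T1 ∪ gA δ σ k) ∩ gA δ σ k = gA δ σ k :=
            Finset.inter_eq_right.mpr Finset.subset_union_right
          have m2 : (T2 ∪ gB δ σ k) ∩ insert e (gB δ σ k) = gB δ σ k := helper_inter hT2B h2e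
          have j1 : ((T1 ∪ gA δ σ k) ∪ gA δ σ k) \ ((T2 ∪ gB δ σ k) ∪ insert e (gB δ σ k))
              = T1 ∪ gA δ σ k := by
            rw [Finset.union_insert, Finset.union_assoc, Finset.union_self,
              Finset.union_assoc, Finset.union_self,
              Finset.sdiff_eq_self_iff_disjoint.mpr
                (Finset.disjoint_insert_right.mpr ⟨heT1A, hXdisj⟩)]
          have j2 : ((T2 ∪ gB δ σ k) ∪ insert e (gB δ σ k)) \ ((T1 ∪ gA δ σ k) ∪ gA δ σ k)
              = T2 ∪ insert e (gB δ σ k) := by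
            rw [Finset.union_insert, Finset.union_assoc, Finset.union_self,
              Finset.union_assoc, Finset.union_self,
              Finset.sdiff_eq_self_iff_disjoint.mpr
                (Finset.disjoint_insert_left.mpr ⟨heT1A, hXdisj.symm⟩),
              Finset.union_insert]
          rw [m1, m2, j1, j2] at hbis
          linarith


/-- For bisubmodular `f` with `f(∅,∅) = 0`, every extremal poly-bimatroid
inequality `w ≥ π^⊤ x` is valid for the epigraph of `f`: for every biset
`(S_1, S_2)` with ternary encoding `x`, `π^⊤ x ≤ f(S_1, S_2)`. -/
theorem extremal_poly_bimatroid_inequality_valid {n : ℕ} (hn : 0 < n)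
    (f : Finset (Fin n) → Finset (Fin n) → ℝ) (hf : Bisubmodular f)
    (h0 : f ∅ ∅ = 0)
    (δ : Equiv.Perm (Fin n)) (σ : Fin n → ℝ) (hσ : ∀ j, σ j = 1 ∨ σ j = -1)
    (S1 S2 : Finset (Fin n)) (hdisj : Disjoint S1 S2) :
    ∑ j : Fin n,
        signedGreedy f δ σ j *
          (if j ∈ S1 then (1 : ℝ) else if j ∈ S2 then -1 else 0)
      ≤ f S1 S2 := by
  have hsum : ∑ j : Fin n, signedGreedy f δ σ j *
        (if j ∈ S1 then (1 : ℝ) else if j ∈ S2 then -1 else 0)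
      = (∑ j ∈ S1, signedGreedy f δ σ j) - (∑ j ∈ S2, signedGreedy f δ σ j) := by
    have hterm : ∀ j ∈ Finset.univ, signedGreedy f δ σ j *
        (if j ∈ S1 then (1 : ℝ) else if j ∈ S2 then -1 else 0)
        = (if j ∈ S1 then signedGreedy f δ σ j else 0)
          - (if j ∈ S2 then signedGreedy f δ σ j else 0) := by
      intro j _
      by_cases h1 : j ∈ S1
      · have h2 : j ∉ S2 := Finset.disjoint_left.mp hdisj h1
        simp [h1, h2]
      · by_cases h2 : j ∈ S2 <;> simp [h1, h2]
    rw [Finset.sum_congr rfl hterm, Finset.sum_sub_distrib]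
    congr 1 <;> rw [Finset.sum_ite_mem, Finset.univ_inter]
  rw [hsum]
  have hk := key f hf δ σ n 0 (by omega) S1 S2 hdisj
    (fun j _ => Nat.zero_le _) (fun j _ => Nat.zero_le _)
  rwa [gA_zero, gB_zero, Finset.union_empty, Finset.union_empty, h0, sub_zero] at hk
end

section
/- Let f : 3^N → ℝ be bisubmodular with f(∅,∅) = 0, viewed via ternary encodings as a function on {0,±1}^n. Then the convex hull of the epigraph {(x,w) ∈ {0,±1}^n × ℝ : w ≥ f(x)} is described completely by all extremal poly-bimatroid inequalities w ≥ π^⊤x (one for each permutation δ of N and each sign vector σ ∈ {±1}^n, with π produced by the signed greedy procedure) together with the trivial inequalities −1 ≤ x_i ≤ 1 for all i ∈ {1,…,n}. -/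
open scoped Classical

namespace BisubAux

variable {n : ℕ} (δ : Equiv.Perm (Fin n)) (σ : Fin n → ℝ)

noncomputable def chain1 (k : ℕ) : Finset (Fin n) :=
  (Finset.univ.filter (fun l : Fin n => l.val < k ∧ σ (δ l) = 1)).image δ

noncomputable def chain2 (k : ℕ) : Finset (Fin n) :=
  (Finset.univ.filter (fun l : Fin n => l.val < k ∧ σ (δ l) ≠ 1)).image δ

variable {δ σ}

lemma mem_chain1 {m : Fin n} {k : ℕ} :
    m ∈ chain1 δ σ k ↔ (δ.symm m).val < k ∧ σ m = 1 := by
  simp only [chain1, Finset.mem_image, Finset.mem_filter, Finset.mem_univ, true_and]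
  constructor
  · rintro ⟨l, ⟨h1, h2⟩, rfl⟩; simpa using ⟨h1, h2⟩
  · rintro ⟨h1, h2⟩; exact ⟨δ.symm m, ⟨h1, by simpa using h2⟩, by simp⟩

lemma mem_chain2 {m : Fin n} {k : ℕ} :
    m ∈ chain2 δ σ k ↔ (δ.symm m).val < k ∧ σ m ≠ 1 := by
  simp only [chain2, Finset.mem_image, Finset.mem_filter, Finset.mem_univ, true_and]
  constructor
  · rintro ⟨l, ⟨h1, h2⟩, rfl⟩; simpa using ⟨h1, h2⟩
  · rintro ⟨h1, h2⟩; exact ⟨δ.symm m, ⟨h1, by simpa using h2⟩, by simp⟩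

lemma sgFirst_eq (i : Fin n) : sgFirst δ σ i = chain1 δ σ i.val := by
  ext m
  rw [mem_chain1]
  simp only [sgFirst, Finset.mem_image, Finset.mem_filter, Finset.mem_univ, true_and]
  constructor
  · rintro ⟨l, ⟨h1, h2⟩, rfl⟩
    refine ⟨?_, by simpa using h2⟩
    simpa using Fin.lt_def.mp h1
  · rintro ⟨h1, h2⟩
    exact ⟨δ.symm m, ⟨Fin.lt_def.mpr h1, by simpa using h2⟩, by simp⟩

lemma sgSecond_eq (i : Fin n) : sgSecond δ σ i = chain2 δ σ i.val := by
  ext m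
  rw [mem_chain2]
  simp only [sgSecond, Finset.mem_image, Finset.mem_filter, Finset.mem_univ, true_and]
  constructor
  · rintro ⟨l, ⟨h1, h2⟩, rfl⟩
    refine ⟨?_, by simpa using h2⟩
    simpa using Fin.lt_def.mp h1
  · rintro ⟨h1, h2⟩
    exact ⟨δ.symm m, ⟨Fin.lt_def.mpr h1, by simpa using h2⟩, by simp⟩

lemma chain1_zero : chain1 δ σ 0 = ∅ := by
  ext m; simp [mem_chain1]

lemma chain2_zero : chain2 δ σ 0 = ∅ := by
  ext m; simp [mem_chain2]

lemma disjoint_chain (k : ℕ) : Disjoint (chain1 δ σ k) (chain2 δ σ k) := by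
  rw [Finset.disjoint_left]
  intro m h1 h2
  exact (mem_chain2.1 h2).2 (mem_chain1.1 h1).2

lemma not_mem_chain1 {k : ℕ} (hk : k < n) : δ ⟨k, hk⟩ ∉ chain1 δ σ k := by
  simp [mem_chain1]

lemma not_mem_chain2 {k : ℕ} (hk : k < n) : δ ⟨k, hk⟩ ∉ chain2 δ σ k := by
  simp [mem_chain2]

lemma symm_lt_succ_iff {m : Fin n} {k : ℕ} (hk : k < n) :
    (δ.symm m).val < k + 1 ↔ (δ.symm m).val < k ∨ m = δ ⟨k, hk⟩ := by
  constructor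
  · intro h
    rcases Nat.lt_succ_iff_lt_or_eq.1 h with h | h
    · exact Or.inl h
    · right
      have : δ.symm m = ⟨k, hk⟩ := Fin.ext h
      rw [← this]; simp
  · rintro (h | rfl)
    · omega
    · simp

lemma chain1_succ_pos {k : ℕ} (hk : k < n) (h1 : σ (δ ⟨k, hk⟩) = 1) :
    chain1 δ σ (k + 1) = insert (δ ⟨k, hk⟩) (chain1 δ σ k) := by
  ext m
  simp only [mem_chain1, Finset.mem_insert, symm_lt_succ_iff hk]
  constructor
  · rintro ⟨h | rfl, hs⟩
    · exact Or.inr ⟨h, hs⟩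
    · exact Or.inl rfl
  · rintro (rfl | ⟨h, hs⟩)
    · exact ⟨Or.inr rfl, h1⟩
    · exact ⟨Or.inl h, hs⟩

lemma chain1_succ_neg {k : ℕ} (hk : k < n) (h1 : ¬ σ (δ ⟨k, hk⟩) = 1) :
    chain1 δ σ (k + 1) = chain1 δ σ k := by
  ext m
  simp only [mem_chain1, symm_lt_succ_iff hk]
  constructor
  · rintro ⟨h | rfl, hs⟩
    · exact ⟨h, hs⟩
    · exact absurd hs h1
  · rintro ⟨h, hs⟩; exact ⟨Or.inl h, hs⟩

lemma chain2_succ_pos {k : ℕ} (hk : k < n) (h1 : σ (δ ⟨k, hk⟩) = 1) :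
    chain2 δ σ (k + 1) = chain2 δ σ k := by
  ext m
  simp only [mem_chain2, symm_lt_succ_iff hk]
  constructor
  · rintro ⟨h | rfl, hs⟩
    · exact ⟨h, hs⟩
    · exact absurd h1 hs
  · rintro ⟨h, hs⟩; exact ⟨Or.inl h, hs⟩

lemma chain2_succ_neg {k : ℕ} (hk : k < n) (h1 : ¬ σ (δ ⟨k, hk⟩) = 1) :
    chain2 δ σ (k + 1) = insert (δ ⟨k, hk⟩) (chain2 δ σ k) := by
  ext m
  simp only [mem_chain2, Finset.mem_insert, symm_lt_succ_iff hk]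
  constructor
  · rintro ⟨h | rfl, hs⟩
    · exact Or.inr ⟨h, hs⟩
    · exact Or.inl rfl
  · rintro (rfl | ⟨h, hs⟩)
    · exact ⟨Or.inr rfl, h1⟩
    · exact ⟨Or.inl h, hs⟩

end BisubAux

namespace BisubAux

variable {n : ℕ} {δ : Equiv.Perm (Fin n)} {σ : Fin n → ℝ}
  {f : Finset (Fin n) → Finset (Fin n) → ℝ}

/-- modular function from a vector -/
noncomputable def pmod (π : Fin n → ℝ) (X1 X2 : Finset (Fin n)) : ℝ :=
  ∑ j ∈ X1, π j - ∑ j ∈ X2, π j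

lemma sg_step_pos {k : ℕ} (hk : k < n) (h1 : σ (δ ⟨k, hk⟩) = 1) :
    signedGreedy f δ σ (δ ⟨k, hk⟩) =
      f (insert (δ ⟨k, hk⟩) (chain1 δ σ k)) (chain2 δ σ k) -
        f (chain1 δ σ k) (chain2 δ σ k) := by
  have hs : δ.symm (δ ⟨k, hk⟩) = ⟨k, hk⟩ := Equiv.symm_apply_apply _ _
  rw [signedGreedy, if_pos h1, sgFirst_eq, sgSecond_eq, hs]

lemma sg_step_neg {k : ℕ} (hk : k < n) (h1 : ¬ σ (δ ⟨k, hk⟩) = 1) :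
    signedGreedy f δ σ (δ ⟨k, hk⟩) =
      -f (chain1 δ σ k) (insert (δ ⟨k, hk⟩) (chain2 δ σ k)) +
        f (chain1 δ σ k) (chain2 δ σ k) := by
  have hs : δ.symm (δ ⟨k, hk⟩) = ⟨k, hk⟩ := Equiv.symm_apply_apply _ _
  rw [signedGreedy, if_neg h1, sgFirst_eq, sgSecond_eq, hs]

lemma tight (h0 : f ∅ ∅ = 0) :
    ∀ k, k ≤ n → pmod (signedGreedy f δ σ) (chain1 δ σ k) (chain2 δ σ k) =
      f (chain1 δ σ k) (chain2 δ σ k) := by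
  intro k
  induction k with
  | zero => intro _; simp [pmod, chain1_zero, chain2_zero, h0]
  | succ k ih =>
    intro hk1
    have hk : k < n := hk1
    have ih' := ih (le_of_lt hk)
    by_cases h1 : σ (δ ⟨k, hk⟩) = 1
    · rw [chain1_succ_pos hk h1, chain2_succ_pos hk h1, pmod,
        Finset.sum_insert (not_mem_chain1 hk)]
      have := sg_step_pos (f := f) hk h1
      rw [pmod] at ih'
      rw [this]; linarith
    · rw [chain1_succ_neg hk h1, chain2_succ_neg hk h1, pmod,
        Finset.sum_insert (not_mem_chain2 hk)]
      have := sg_step_neg (f := f) hk h1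
      rw [pmod] at ih'
      rw [this]; linarith

end BisubAux

namespace BisubAux

variable {n : ℕ} {δ : Equiv.Perm (Fin n)} {σ : Fin n → ℝ}
  {f : Finset (Fin n) → Finset (Fin n) → ℝ}

noncomputable def muTerm (σ : Fin n → ℝ) (X1 X2 : Finset (Fin n)) (j : Fin n) : ℕ :=
  if σ j = 1 then (if j ∈ X1 then 0 else if j ∈ X2 then 2 else 1)
  else (if j ∈ X2 then 0 else if j ∈ X1 then 2 else 1)

noncomputable def mu (σ : Fin n → ℝ) (X1 X2 : Finset (Fin n)) : ℕ :=
  ∑ j : Fin n, muTerm σ X1 X2 j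

lemma validity (hf : Bisubmodular f) (h0 : f ∅ ∅ = 0) (δ : Equiv.Perm (Fin n))
    (σ : Fin n → ℝ) (X1 X2 : Finset (Fin n)) (hd : Disjoint X1 X2) :
    pmod (signedGreedy f δ σ) X1 X2 ≤ f X1 X2 := by
  suffices H : ∀ m : ℕ, ∀ X1 X2 : Finset (Fin n), Disjoint X1 X2 → mu σ X1 X2 = m →
      pmod (signedGreedy f δ σ) X1 X2 ≤ f X1 X2 from H _ X1 X2 hd rfl
  intro m
  induction m using Nat.strong_induction_on with
  | _ m IH =>
  intro X1 X2 hd hm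
  set π := signedGreedy f δ σ with hπ
  by_cases hall : ∀ l : Fin n, (if σ (δ l) = 1 then δ l ∈ X1 else δ l ∈ X2)
  · have e1 : X1 = chain1 δ σ n := by
      ext m'
      rw [mem_chain1]
      have h := hall (δ.symm m'); rw [Equiv.apply_symm_apply] at h
      constructor
      · intro hx; refine ⟨(δ.symm m').isLt, ?_⟩
        by_contra hs; rw [if_neg hs] at h; exact Finset.disjoint_left.mp hd hx h
      · rintro ⟨-, hs⟩; rw [if_pos hs] at h; exact h
    have e2 : X2 = chain2 δ σ n := by
      ext m'
      rw [mem_chain2]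
      have h := hall (δ.symm m'); rw [Equiv.apply_symm_apply] at h
      constructor
      · intro hx; refine ⟨(δ.symm m').isLt, ?_⟩
        intro hs; rw [if_pos hs] at h; exact Finset.disjoint_left.mp hd h hx
      · rintro ⟨-, hs⟩; rw [if_neg hs] at h; exact h
    rw [e1, e2, tight h0 n le_rfl]
  · push_neg at hall
    set B := Finset.univ.filter
      (fun l : Fin n => ¬(if σ (δ l) = 1 then δ l ∈ X1 else δ l ∈ X2)) with hB
    have hne : B.Nonempty := by
      obtain ⟨l, hl⟩ := hall
      refine ⟨l, ?_⟩
      rw [hB, Finset.mem_filter]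
      exact ⟨Finset.mem_univ _, hl⟩
    set i := B.min' hne with hidef
    have hk : i.val < n := i.isLt
    set j := δ i with hjdef
    have hoff : ¬(if σ j = 1 then j ∈ X1 else j ∈ X2) := by
      exact (Finset.mem_filter.mp (B.min'_mem hne)).2
    have onside' : ∀ m' : Fin n, (δ.symm m').val < i.val →
        (if σ m' = 1 then m' ∈ X1 else m' ∈ X2) := by
      intro m' hlt
      by_contra hcon
      have hmB : δ.symm m' ∈ B := by
        rw [hB, Finset.mem_filter]
        refine ⟨Finset.mem_univ _, ?_⟩
        rw [Equiv.apply_symm_apply]; exact hcon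
      have hle := Fin.le_def.mp (B.min'_le _ hmB)
      omega
    have hsymmj : (δ.symm j).val = i.val := by rw [hjdef, Equiv.symm_apply_apply]
    have hposk : ∀ m' : Fin n, (δ.symm m').val = i.val → m' = j := by
      intro m' h
      have h2 : δ.symm m' = δ.symm j := Fin.ext (by rw [h, hsymmj])
      exact δ.symm.injective h2
    -- intersection identities
    have hI1 : X1 ∩ chain1 δ σ (i.val + 1) = chain1 δ σ i.val := by
      ext m'
      rw [Finset.mem_inter, mem_chain1, mem_chain1]
      constructor
      · rintro ⟨hx, hlt, hs⟩
        refine ⟨?_, hs⟩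
        rcases Nat.lt_succ_iff_lt_or_eq.1 hlt with h | h
        · exact h
        · exfalso
          have hmj := hposk m' h
          subst hmj
          rw [if_pos hs] at hoff
          exact hoff hx
      · rintro ⟨hlt, hs⟩
        have hos := onside' m' hlt
        rw [if_pos hs] at hos
        exact ⟨hos, Nat.lt_succ_of_lt hlt, hs⟩
    have hI2 : X2 ∩ chain2 δ σ (i.val + 1) = chain2 δ σ i.val := by
      ext m'
      rw [Finset.mem_inter, mem_chain2, mem_chain2]
      constructor
      · rintro ⟨hx, hlt, hs⟩
        refine ⟨?_, hs⟩
        rcases Nat.lt_succ_iff_lt_or_eq.1 hlt with h | h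
        · exact h
        · exfalso
          have hmj := hposk m' h
          subst hmj
          rw [if_neg hs] at hoff
          exact hoff hx
      · rintro ⟨hlt, hs⟩
        have hos := onside' m' hlt
        rw [if_neg hs] at hos
        exact ⟨hos, Nat.lt_succ_of_lt hlt, hs⟩
    -- characterizations of the union-sdiff sets
    have hc1 : ∀ m' : Fin n,
        (m' ∈ (X1 ∪ chain1 δ σ (i.val + 1)) \ (X2 ∪ chain2 δ σ (i.val + 1))) ↔
          ((m' = j ∧ σ j = 1 ∧ j ∉ X2) ∨ (m' ≠ j ∧ m' ∈ X1)) := by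
      intro m'
      rw [Finset.mem_sdiff, Finset.mem_union, Finset.mem_union, mem_chain1, mem_chain2]
      by_cases hmj : m' = j
      · subst hmj
        rw [hsymmj]
        constructor
        · rintro ⟨hin, hnot⟩
          push_neg at hnot
          exact Or.inl ⟨rfl, hnot.2 (Nat.lt_succ_self _), hnot.1⟩
        · rintro (⟨-, hs, hx2⟩ | ⟨hnee, -⟩)
          · refine ⟨Or.inr ⟨Nat.lt_succ_self _, hs⟩, ?_⟩
            push_neg
            exact ⟨hx2, fun _ => hs⟩
          · exact absurd rfl hnee
      · have hnek : (δ.symm m').val ≠ i.val := fun h => hmj (hposk m' h)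
        by_cases hlt : (δ.symm m').val < i.val
        · have hlt1 : (δ.symm m').val < i.val + 1 := by omega
          have hos := onside' m' hlt
          by_cases hs : σ m' = 1
          · rw [if_pos hs] at hos
            have hx2 : m' ∉ X2 := Finset.disjoint_left.mp hd hos
            simp [hos, hx2, hs, hlt1, hmj]
          · rw [if_neg hs] at hos
            have hx1 : m' ∉ X1 := Finset.disjoint_right.mp hd hos
            simp [hos, hx1, hs, hlt1, hmj]
        · have hlt1 : ¬ (δ.symm m').val < i.val + 1 := by omega
          by_cases hx1 : m' ∈ X1
          · have hx2 : m' ∉ X2 := Finset.disjoint_left.mp hd hx1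
            simp [hx1, hx2, hlt1, hmj]
          · simp [hx1, hlt1, hmj]
    have hc2 : ∀ m' : Fin n,
        (m' ∈ (X2 ∪ chain2 δ σ (i.val + 1)) \ (X1 ∪ chain1 δ σ (i.val + 1))) ↔
          ((m' = j ∧ ¬ σ j = 1 ∧ j ∉ X1) ∨ (m' ≠ j ∧ m' ∈ X2)) := by
      intro m'
      rw [Finset.mem_sdiff, Finset.mem_union, Finset.mem_union, mem_chain1, mem_chain2]
      by_cases hmj : m' = j
      · subst hmj
        rw [hsymmj]
        constructor
        · rintro ⟨hin, hnot⟩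
          push_neg at hnot
          refine Or.inl ⟨rfl, ?_, hnot.1⟩
          intro hs
          exact (hnot.2 (Nat.lt_succ_self _)) hs
        · rintro (⟨-, hs, hx1⟩ | ⟨hnee, -⟩)
          · refine ⟨Or.inr ⟨Nat.lt_succ_self _, hs⟩, ?_⟩
            push_neg
            exact ⟨hx1, fun _ hss => hs hss⟩
          · exact absurd rfl hnee
      · have hnek : (δ.symm m').val ≠ i.val := fun h => hmj (hposk m' h)
        by_cases hlt : (δ.symm m').val < i.val
        · have hlt1 : (δ.symm m').val < i.val + 1 := by omega
          have hos := onside' m' hlt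
          by_cases hs : σ m' = 1
          · rw [if_pos hs] at hos
            have hx2 : m' ∉ X2 := Finset.disjoint_left.mp hd hos
            simp [hos, hx2, hs, hlt1, hmj]
          · rw [if_neg hs] at hos
            have hx1 : m' ∉ X1 := Finset.disjoint_right.mp hd hos
            simp [hos, hx1, hs, hlt1, hmj]
        · have hlt1 : ¬ (δ.symm m').val < i.val + 1 := by omega
          by_cases hx2 : m' ∈ X2
          · have hx1 : m' ∉ X1 := Finset.disjoint_right.mp hd hx2
            simp [hx1, hx2, hlt1, hmj]
          · simp [hx2, hlt1, hmj]
    -- local mu comparison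
    have hmulocal : ∀ Y1 Y2 : Finset (Fin n),
        (∀ m' : Fin n, m' ≠ j → ((m' ∈ Y1 ↔ m' ∈ X1) ∧ (m' ∈ Y2 ↔ m' ∈ X2))) →
        muTerm σ Y1 Y2 j < muTerm σ X1 X2 j → mu σ Y1 Y2 < mu σ X1 X2 := by
      intro Y1 Y2 hsame hlt
      apply Finset.sum_lt_sum
      · intro m' _
        by_cases hmj : m' = j
        · subst hmj; exact hlt.le
        · have hs := hsame m' hmj
          simp only [muTerm, hs.1, hs.2]
          exact le_refl _
      · exact ⟨j, Finset.mem_univ j, hlt⟩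
    -- the common final step
    have key : ∀ Y1 Y2 : Finset (Fin n), Disjoint Y1 Y2 →
        (X1 ∪ chain1 δ σ (i.val + 1)) \ (X2 ∪ chain2 δ σ (i.val + 1)) = Y1 →
        (X2 ∪ chain2 δ σ (i.val + 1)) \ (X1 ∪ chain1 δ σ (i.val + 1)) = Y2 →
        mu σ Y1 Y2 < m →
        (∃ c : ℝ, pmod π Y1 Y2 = pmod π X1 X2 + c ∧
          pmod π (chain1 δ σ (i.val + 1)) (chain2 δ σ (i.val + 1)) =
            pmod π (chain1 δ σ i.val) (chain2 δ σ i.val) + c) →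
        pmod π X1 X2 ≤ f X1 X2 := by
      rintro Y1 Y2 hdY hU1 hU2 hmuY ⟨c, hpY, hpD⟩
      have hbis := hf X1 X2 (chain1 δ σ (i.val + 1)) (chain2 δ σ (i.val + 1)) hd
        (disjoint_chain (i.val + 1))
      rw [hI1, hI2, hU1, hU2] at hbis
      have hY := IH _ hmuY Y1 Y2 hdY rfl
      have ht1 := tight (δ := δ) (σ := σ) h0 i.val hk.le
      have ht2 := tight (δ := δ) (σ := σ) h0 (i.val + 1) hk
      rw [← hπ] at ht1 ht2
      linarith
    have hch1pos : σ j = 1 → chain1 δ σ (i.val + 1) = insert j (chain1 δ σ i.val) :=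
      fun h => chain1_succ_pos i.isLt h
    have hch2pos : σ j = 1 → chain2 δ σ (i.val + 1) = chain2 δ σ i.val :=
      fun h => chain2_succ_pos i.isLt h
    have hch1neg : ¬ σ j = 1 → chain1 δ σ (i.val + 1) = chain1 δ σ i.val :=
      fun h => chain1_succ_neg i.isLt h
    have hch2neg : ¬ σ j = 1 → chain2 δ σ (i.val + 1) = insert j (chain2 δ σ i.val) :=
      fun h => chain2_succ_neg i.isLt h
    have hnm1 : j ∉ chain1 δ σ i.val := not_mem_chain1 i.isLt
    have hnm2 : j ∉ chain2 δ σ i.val := not_mem_chain2 i.isLt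
    by_cases h1 : σ j = 1
    · have hjx1 : j ∉ X1 := by rw [if_pos h1] at hoff; exact hoff
      by_cases h2 : j ∈ X2
      · -- Y = (X1, X2.erase j)
        refine key X1 (X2.erase j) (hd.mono_right (Finset.erase_subset _ _)) ?_ ?_ ?_
          ⟨π j, ?_, ?_⟩
        · ext m'; rw [hc1 m']
          constructor
          · rintro (⟨rfl, -, hj2⟩ | ⟨-, h⟩)
            · exact absurd h2 hj2
            · exact h
          · intro h; exact Or.inr ⟨fun e => hjx1 (e ▸ h), h⟩
        · ext m'; rw [hc2 m', Finset.mem_erase]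
          constructor
          · rintro (⟨rfl, hs, -⟩ | ⟨hnee, h⟩)
            · exact absurd h1 hs
            · exact ⟨hnee, h⟩
          · rintro ⟨hnee, h⟩; exact Or.inr ⟨hnee, h⟩
        · rw [← hm]
          apply hmulocal
          · intro m' hnee
            exact ⟨Iff.rfl, by simp [Finset.mem_erase, hnee]⟩
          · simp [muTerm, h1, h2, hjx1]
        · rw [pmod, pmod, Finset.sum_erase_eq_sub h2]; ring
        · rw [hch1pos h1, hch2pos h1, pmod, pmod, Finset.sum_insert hnm1]; ring
      · -- Y = (insert j X1, X2)
        refine key (insert j X1) X2 (Finset.disjoint_insert_left.mpr ⟨h2, hd⟩) ?_ ?_ ?_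
          ⟨π j, ?_, ?_⟩
        · ext m'; rw [hc1 m', Finset.mem_insert]
          constructor
          · rintro (⟨rfl, -, -⟩ | ⟨-, h⟩)
            · exact Or.inl rfl
            · exact Or.inr h
          · rintro (rfl | h)
            · exact Or.inl ⟨rfl, h1, h2⟩
            · exact Or.inr ⟨fun e => hjx1 (e ▸ h), h⟩
        · ext m'; rw [hc2 m']
          constructor
          · rintro (⟨rfl, hs, -⟩ | ⟨-, h⟩)
            · exact absurd h1 hs
            · exact h
          · intro h; exact Or.inr ⟨fun e => h2 (e ▸ h), h⟩
        · rw [← hm]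
          apply hmulocal
          · intro m' hnee
            exact ⟨by simp [Finset.mem_insert, hnee], Iff.rfl⟩
          · simp [muTerm, h1, h2, hjx1]
        · rw [pmod, pmod, Finset.sum_insert hjx1]; ring
        · rw [hch1pos h1, hch2pos h1, pmod, pmod, Finset.sum_insert hnm1]; ring
    · have hjx2 : j ∉ X2 := by rw [if_neg h1] at hoff; exact hoff
      by_cases h2 : j ∈ X1
      · -- Y = (X1.erase j, X2)
        refine key (X1.erase j) X2 (hd.mono_left (Finset.erase_subset _ _)) ?_ ?_ ?_
          ⟨-π j, ?_, ?_⟩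
        · ext m'; rw [hc1 m', Finset.mem_erase]
          constructor
          · rintro (⟨rfl, hs, -⟩ | ⟨hnee, h⟩)
            · exact absurd hs h1
            · exact ⟨hnee, h⟩
          · rintro ⟨hnee, h⟩; exact Or.inr ⟨hnee, h⟩
        · ext m'; rw [hc2 m']
          constructor
          · rintro (⟨rfl, -, hj1⟩ | ⟨-, h⟩)
            · exact absurd h2 hj1
            · exact h
          · intro h; exact Or.inr ⟨fun e => hjx2 (e ▸ h), h⟩
        · rw [← hm]
          apply hmulocal
          · intro m' hnee
            exact ⟨by simp [Finset.mem_erase, hnee], Iff.rfl⟩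
          · simp [muTerm, h1, h2, hjx2]
        · rw [pmod, pmod, Finset.sum_erase_eq_sub h2]; ring
        · rw [hch1neg h1, hch2neg h1, pmod, pmod, Finset.sum_insert hnm2]; ring
      · -- Y = (X1, insert j X2)
        refine key X1 (insert j X2) (Finset.disjoint_insert_right.mpr ⟨h2, hd⟩) ?_ ?_ ?_
          ⟨-π j, ?_, ?_⟩
        · ext m'; rw [hc1 m']
          constructor
          · rintro (⟨rfl, hs, -⟩ | ⟨-, h⟩)
            · exact absurd hs h1
            · exact h
          · intro h; exact Or.inr ⟨fun e => h2 (e ▸ h), h⟩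
        · ext m'; rw [hc2 m', Finset.mem_insert]
          constructor
          · rintro (⟨rfl, -, -⟩ | ⟨-, h⟩)
            · exact Or.inl rfl
            · exact Or.inr h
          · rintro (rfl | h)
            · exact Or.inl ⟨rfl, h1, h2⟩
            · exact Or.inr ⟨fun e => hjx2 (e ▸ h), h⟩
        · rw [← hm]
          apply hmulocal
          · intro m' hnee
            exact ⟨Iff.rfl, by simp [Finset.mem_insert, hnee]⟩
          · simp [muTerm, h1, h2, hjx2]
        · rw [pmod, pmod, Finset.sum_insert hjx2]; ring
        · rw [hch1neg h1, hch2neg h1, pmod, pmod, Finset.sum_insert hnm2]; ring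

end BisubAux

namespace BisubAux
open scoped Pointwise

variable {n : ℕ} {f : Finset (Fin n) → Finset (Fin n) → ℝ}

lemma abel (v F : ℕ → ℝ) (m : ℕ) :
    ∑ k ∈ Finset.range (m + 1), (v k - v (k + 1)) * F k =
      v 0 * F 0 - v (m + 1) * F m +
        ∑ k ∈ Finset.range m, v (k + 1) * (F (k + 1) - F k) := by
  induction m with
  | zero => simp [Finset.sum_range_succ]; ring
  | succ m ih =>
    rw [Finset.sum_range_succ, ih, Finset.sum_range_succ]
    ring

lemma sum_ite_tele (v : ℕ → ℝ) (pos m : ℕ) (h : pos < m) :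
    ∑ k ∈ Finset.range (m + 1), (if pos < k then v k - v (k + 1) else 0) =
      v (pos + 1) - v (m + 1) := by
  induction m with
  | zero => omega
  | succ m ih =>
    rw [Finset.sum_range_succ]
    by_cases hm : pos < m
    · rw [ih hm, if_pos (by omega)]; ring
    · have hpm : pos = m := by omega
      subst hpm
      have hz : ∀ k ∈ Finset.range (pos + 1), (if pos < k then v k - v (k + 1) else 0) = 0 := by
        intro k hk
        rw [if_neg]
        rw [Finset.mem_range] at hk
        omega
      rw [Finset.sum_eq_zero hz, if_pos (Nat.lt_succ_self _)]
      ring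

lemma mem_hull (h0 : f ∅ ∅ = 0) {x : Fin n → ℝ} {w : ℝ}
    (hb : ∀ i, -1 ≤ x i ∧ x i ≤ 1)
    (hw : ∀ (δ : Equiv.Perm (Fin n)) (σ : Fin n → ℝ), (∀ j, σ j = 1 ∨ σ j = -1) →
      ∑ j : Fin n, signedGreedy f δ σ j * x j ≤ w) :
    (x, w) ∈ convexHull ℝ
      {p : (Fin n → ℝ) × ℝ |
        ∃ S1 S2 : Finset (Fin n), Disjoint S1 S2 ∧
          (∀ i, p.1 i = if i ∈ S1 then (1 : ℝ) else if i ∈ S2 then -1 else 0) ∧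
          f S1 S2 ≤ p.2} := by
  classical
  set C := {p : (Fin n → ℝ) × ℝ |
      ∃ S1 S2 : Finset (Fin n), Disjoint S1 S2 ∧
        (∀ i, p.1 i = if i ∈ S1 then (1 : ℝ) else if i ∈ S2 then -1 else 0) ∧
        f S1 S2 ≤ p.2} with hC
  set σ : Fin n → ℝ := fun j => if x j < 0 then -1 else 1 with hσdef
  have hσ : ∀ j, σ j = 1 ∨ σ j = -1 := by
    intro j
    simp only [hσdef]
    by_cases h : x j < 0
    · exact Or.inr (if_pos h)
    · exact Or.inl (if_neg h)
  have hxσ : ∀ j, x j = σ j * |x j| := by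
    intro j
    simp only [hσdef]
    by_cases h : x j < 0
    · rw [if_pos h, abs_of_neg h]; ring
    · rw [if_neg h, abs_of_nonneg (not_lt.mp h)]; ring
  set δ : Equiv.Perm (Fin n) := Tuple.sort (fun l => -|x l|) with hδdef
  have hmono : Monotone ((fun l => -|x l|) ∘ δ) := Tuple.monotone_sort _
  set π := signedGreedy f δ σ with hπ
  set u : ℕ → ℝ := fun k => if h : k < n then |x (δ ⟨k, h⟩)| else 0 with hu
  set v : ℕ → ℝ := fun k => if k = 0 then 1 else u (k - 1) with hv
  have hv0 : v 0 = 1 := by simp [hv]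
  have hvs : ∀ k, v (k + 1) = u k := by intro k; simp [hv]
  have hun : u n = 0 := by simp [hu]
  have hu_anti : ∀ k, u (k + 1) ≤ u k := by
    intro k
    simp only [hu]
    by_cases h1 : k + 1 < n
    · have h2 : k < n := by omega
      rw [dif_pos h1, dif_pos h2]
      have := hmono (show (⟨k, h2⟩ : Fin n) ≤ ⟨k + 1, h1⟩ by
        rw [Fin.le_def]; exact Nat.le_succ k)
      simp only [Function.comp_apply] at this
      linarith
    · rw [dif_neg h1]
      by_cases h2 : k < n
      · rw [dif_pos h2]; exact abs_nonneg _
      · rw [dif_neg h2]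
  have hu_nonneg : ∀ k, 0 ≤ u k := by
    intro k
    simp only [hu]
    by_cases h : k < n
    · rw [dif_pos h]; exact abs_nonneg _
    · rw [dif_neg h]
  have hu0 : u 0 ≤ 1 := by
    simp only [hu]
    by_cases h : 0 < n
    · rw [dif_pos h]
      exact abs_le.mpr ⟨(hb _).1, (hb _).2⟩
    · rw [dif_neg h]; norm_num
  have hlam : ∀ k, 0 ≤ v k - v (k + 1) := by
    intro k
    cases k with
    | zero => rw [hv0, hvs]; linarith [hu0]
    | succ k => rw [hvs, hvs]; linarith [hu_anti k]
  set F : ℕ → ℝ := fun k => f (chain1 δ σ k) (chain2 δ σ k) with hF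
  set z : ℕ → (Fin n → ℝ) × ℝ :=
    fun k => (fun j => if (δ.symm j).val < k then σ j else 0, F k) with hz
  have hzC : ∀ k, z k ∈ C := by
    intro k
    simp only [hC, hz, Set.mem_setOf_eq]
    refine ⟨chain1 δ σ k, chain2 δ σ k, disjoint_chain k, ?_, le_refl _⟩
    intro i
    show (if (δ.symm i).val < k then σ i else 0) = _
    by_cases hlt : (δ.symm i).val < k
    · by_cases hs : σ i = 1
      · have h1 : i ∈ chain1 δ σ k := mem_chain1.mpr ⟨hlt, hs⟩
        simp only [if_pos hlt, if_pos h1, hs]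
      · have h2 : i ∈ chain2 δ σ k := mem_chain2.mpr ⟨hlt, hs⟩
        have h1 : i ∉ chain1 δ σ k := fun h => hs (mem_chain1.mp h).2
        rcases hσ i with h | h
        · exact absurd h hs
        · simp only [if_pos hlt, if_neg h1, if_pos h2, h]
    · have h1 : i ∉ chain1 δ σ k := fun h => hlt (mem_chain1.mp h).1
      have h2 : i ∉ chain2 δ σ k := fun h => hlt (mem_chain2.mp h).1
      simp only [if_neg hlt, if_neg h1, if_neg h2]
  have hsum1 : ∑ k ∈ Finset.range (n + 1), (v k - v (k + 1)) = 1 := by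
    rw [Finset.sum_range_sub' v, hv0, hvs, hun]
    ring
  have hcomb : (∑ k ∈ Finset.range (n + 1), (v k - v (k + 1)) • z k) ∈ convexHull ℝ C := by
    have h := Finset.centerMass_mem_convexHull (Finset.range (n + 1))
      (fun k _ => hlam k) (by rw [hsum1]; norm_num) (fun k _ => hzC k)
    rwa [Finset.centerMass, hsum1, inv_one, one_smul] at h
  have hfst : (∑ k ∈ Finset.range (n + 1), (v k - v (k + 1)) • z k).1 = x := by
    rw [Prod.fst_sum]
    funext j
    rw [Finset.sum_apply]
    have hstep : ∀ k ∈ Finset.range (n + 1),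
        ((v k - v (k + 1)) • z k).1 j =
          (if ((δ.symm j) : ℕ) < k then (v k * σ j) - (v (k + 1) * σ j) else 0) := by
      intro k _
      simp only [hz, Prod.smul_fst, Pi.smul_apply, smul_eq_mul]
      by_cases hlt : (δ.symm j).val < k
      · rw [if_pos hlt, if_pos hlt]; ring
      · rw [if_neg hlt, if_neg hlt]; ring
    rw [Finset.sum_congr rfl hstep,
      sum_ite_tele (fun k => v k * σ j) (δ.symm j).val n (δ.symm j).isLt]
    have hvp : u ((δ.symm j) : ℕ) = |x j| := by
      simp only [hu]
      rw [dif_pos (δ.symm j).isLt]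
      have heta : (⟨((δ.symm j) : ℕ), (δ.symm j).isLt⟩ : Fin n) = δ.symm j := rfl
      rw [heta, Equiv.apply_symm_apply]
    rw [hvs, hvs, hun, hvp]
    conv_rhs => rw [hxσ j]
    ring
  have hsnd : (∑ k ∈ Finset.range (n + 1), (v k - v (k + 1)) • z k).2 =
      ∑ j : Fin n, π j * x j := by
    rw [Prod.snd_sum]
    have hstep : ∀ k ∈ Finset.range (n + 1),
        ((v k - v (k + 1)) • z k).2 = (v k - v (k + 1)) * F k := by
      intro k _
      simp only [hz, Prod.smul_snd, smul_eq_mul]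
    rw [Finset.sum_congr rfl hstep, abel v F n]
    have hF0 : F 0 = 0 := by
      simp only [hF]
      rw [chain1_zero, chain2_zero, h0]
    have hterm : ∀ k ∈ Finset.range n,
        v (k + 1) * (F (k + 1) - F k) =
          (if h : k < n then π (δ ⟨k, h⟩) * x (δ ⟨k, h⟩) else 0) := by
      intro k hk
      rw [Finset.mem_range] at hk
      rw [dif_pos hk, hvs]
      have hx : x (δ ⟨k, hk⟩) = σ (δ ⟨k, hk⟩) * u k := by
        rw [hxσ (δ ⟨k, hk⟩)]
        simp only [hu]
        rw [dif_pos hk]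
      rcases hσ (δ ⟨k, hk⟩) with hs | hs
      · have hstep' : F (k + 1) - F k = π (δ ⟨k, hk⟩) := by
          simp only [hF, hπ]
          rw [sg_step_pos hk hs, chain1_succ_pos hk hs, chain2_succ_pos hk hs]
        rw [hstep', hx, hs]; ring
      · have hs' : ¬ σ (δ ⟨k, hk⟩) = 1 := by rw [hs]; norm_num
        have hstep' : F (k + 1) - F k = -π (δ ⟨k, hk⟩) := by
          simp only [hF, hπ]
          rw [sg_step_neg hk hs', chain1_succ_neg hk hs', chain2_succ_neg hk hs']
          ring
        rw [hstep', hx, hs]; ring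
    rw [Finset.sum_congr rfl hterm, hF0, hvs, hun]
    rw [← Fin.sum_univ_eq_sum_range
      (fun k => if h : k < n then π (δ ⟨k, h⟩) * x (δ ⟨k, h⟩) else 0) n]
    have hred : ∀ i : Fin n,
        (if h : (i : ℕ) < n then π (δ ⟨i, h⟩) * x (δ ⟨i, h⟩) else 0) =
          π (δ i) * x (δ i) := by
      intro i
      rw [dif_pos i.isLt]
    rw [Finset.sum_congr rfl (fun i _ => hred i)]
    rw [← Equiv.sum_comp δ (fun j => π j * x j)]
    ring
  set q : (Fin n → ℝ) × ℝ := ∑ k ∈ Finset.range (n + 1), (v k - v (k + 1)) • z k with hq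
  have hqmem : q ∈ convexHull ℝ C := hcomb
  have hpx := hw δ σ hσ
  rw [← hπ] at hpx
  set c : ℝ := w - ∑ j : Fin n, π j * x j with hc
  have hqeq : q = (x, ∑ j : Fin n, π j * x j) := Prod.ext hfst hsnd
  have hxw : (x, w) = (((0 : Fin n → ℝ), c) : (Fin n → ℝ) × ℝ) +ᵥ q := by
    rw [hqeq, vadd_eq_add, Prod.mk_add_mk, Prod.mk.injEq]
    constructor
    · funext i; rw [Pi.add_apply, Pi.zero_apply, zero_add]
    · rw [hc]; ring
  rw [hxw]
  have h1 : (((0 : Fin n → ℝ), c) : (Fin n → ℝ) × ℝ) +ᵥ q ∈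
      convexHull ℝ ((((0 : Fin n → ℝ), c) : (Fin n → ℝ) × ℝ) +ᵥ C) := by
    rw [convexHull_vadd]
    exact Set.vadd_mem_vadd_set hqmem
  refine convexHull_mono ?_ h1
  rintro p ⟨p', hp', rfl⟩
  obtain ⟨S1, S2, hd, hcoord, hfle⟩ := hp'
  refine ⟨S1, S2, hd, ?_, ?_⟩
  · intro i
    show ((0 : Fin n → ℝ) + p'.1) i = _
    rw [Pi.add_apply, Pi.zero_apply, zero_add]
    exact hcoord i
  · show f S1 S2 ≤ c + p'.2
    have hcnn : 0 ≤ c := by rw [hc]; linarith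
    linarith

end BisubAux

/-- For bisubmodular `f` with `f(∅,∅) = 0`, the convex hull of the epigraph
`{(x,w) ∈ {0,±1}^n × ℝ : w ≥ f(x)}` (with bisets encoded as ternary vectors)
is described completely by all extremal poly-bimatroid inequalities
`w ≥ π^⊤ x` (one for each permutation `δ` and sign vector `σ ∈ {±1}^n`)
together with the trivial inequalities `−1 ≤ x_i ≤ 1`. -/
theorem convexHull_bisubmodular_epigraph {n : ℕ} (hn : 0 < n)
    (f : Finset (Fin n) → Finset (Fin n) → ℝ) (hf : Bisubmodular f)
    (h0 : f ∅ ∅ = 0) :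
    convexHull ℝ
        {p : (Fin n → ℝ) × ℝ |
          ∃ S1 S2 : Finset (Fin n), Disjoint S1 S2 ∧
            (∀ i, p.1 i = if i ∈ S1 then (1 : ℝ) else if i ∈ S2 then -1 else 0) ∧
            f S1 S2 ≤ p.2} =
      {p : (Fin n → ℝ) × ℝ |
        (∀ i, -1 ≤ p.1 i ∧ p.1 i ≤ 1) ∧
        ∀ (δ : Equiv.Perm (Fin n)) (σ : Fin n → ℝ), (∀ j, σ j = 1 ∨ σ j = -1) →
          ∑ j : Fin n, signedGreedy f δ σ j * p.1 j ≤ p.2} := by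
  apply Set.Subset.antisymm
  · apply convexHull_min
    · rintro ⟨x, w⟩ ⟨S1, S2, hd, hx, hwle⟩
      have hx' : ∀ i, x i = if i ∈ S1 then (1 : ℝ) else if i ∈ S2 then -1 else 0 := hx
      have hwle' : f S1 S2 ≤ w := hwle
      refine ⟨?_, ?_⟩
      · intro i
        show -1 ≤ x i ∧ x i ≤ 1
        rw [hx' i]
        split_ifs <;> norm_num
      · intro δ σ hσ
        show ∑ j : Fin n, signedGreedy f δ σ j * x j ≤ w
        have hterm : ∀ j ∈ Finset.univ, signedGreedy f δ σ j * x j =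
            (if j ∈ S1 then signedGreedy f δ σ j else 0) -
              (if j ∈ S2 then signedGreedy f δ σ j else 0) := by
          intro j _
          rw [hx' j]
          by_cases h1 : j ∈ S1
          · have h2 : j ∉ S2 := Finset.disjoint_left.mp hd h1
            rw [if_pos h1, if_pos h1, if_neg h2]; ring
          · by_cases h2 : j ∈ S2
            · rw [if_neg h1, if_pos h2, if_neg h1, if_pos h2]; ring
            · rw [if_neg h1, if_neg h2, if_neg h1, if_neg h2]; ring
        have hsum : ∑ j : Fin n, signedGreedy f δ σ j * x j =
            BisubAux.pmod (signedGreedy f δ σ) S1 S2 := by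
          rw [BisubAux.pmod, Finset.sum_congr rfl hterm, Finset.sum_sub_distrib,
            Finset.sum_ite_mem, Finset.sum_ite_mem, Finset.univ_inter, Finset.univ_inter]
        rw [hsum]
        exact le_trans (BisubAux.validity hf h0 δ σ S1 S2 hd) hwle'
    · intro p hp q hq a b ha hb hab
      have hfst : ∀ i, (a • p + b • q).1 i = a * p.1 i + b * q.1 i := by
        intro i
        simp [Prod.fst_add, Prod.smul_fst, Pi.add_apply, Pi.smul_apply, smul_eq_mul]
      have hsnd : (a • p + b • q).2 = a * p.2 + b * q.2 := by
        simp [Prod.snd_add, Prod.smul_snd, smul_eq_mul]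
      refine ⟨?_, ?_⟩
      · intro i
        have h1 := hp.1 i
        have h2 := hq.1 i
        rw [hfst i]
        have e1 : a * (-1) ≤ a * p.1 i := mul_le_mul_of_nonneg_left h1.1 ha
        have e2 : a * p.1 i ≤ a * 1 := mul_le_mul_of_nonneg_left h1.2 ha
        have e3 : b * (-1) ≤ b * q.1 i := mul_le_mul_of_nonneg_left h2.1 hb
        have e4 : b * q.1 i ≤ b * 1 := mul_le_mul_of_nonneg_left h2.2 hb
        constructor <;> nlinarith
      · intro δ σ hσ
        have h1 := hp.2 δ σ hσ
        have h2 := hq.2 δ σ hσ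
        have hsum : ∑ j : Fin n, signedGreedy f δ σ j * (a • p + b • q).1 j =
            a * ∑ j : Fin n, signedGreedy f δ σ j * p.1 j +
              b * ∑ j : Fin n, signedGreedy f δ σ j * q.1 j := by
          rw [Finset.mul_sum, Finset.mul_sum, ← Finset.sum_add_distrib]
          refine Finset.sum_congr rfl fun j _ => ?_
          rw [hfst j]
          ring
        rw [hsum, hsnd]
        have e1 : a * ∑ j : Fin n, signedGreedy f δ σ j * p.1 j ≤ a * p.2 :=
          mul_le_mul_of_nonneg_left h1 ha
        have e2 : b * ∑ j : Fin n, signedGreedy f δ σ j * q.1 j ≤ b * q.2 :=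
          mul_le_mul_of_nonneg_left h2 hb
        linarith
  · rintro ⟨x, w⟩ ⟨hbnd, hineq⟩
    exact BisubAux.mem_hull h0 hbnd hineq
end

section
/- A twice continuously differentiable function f : ℝ^n → ℝ is DR-submodular if and only if all entries of its Hessian are nonpositive at every point: ∂²f/∂x_i∂x_j (x) ≤ 0 for all i, j ∈ {1,…,n} and all x ∈ ℝ^n. -/
/-- `f : ℝ^n → ℝ` is DR-submodular if
`f(x + αe^i) − f(x) ≥ f(y + αe^i) − f(y)` for every coordinate `i`, all
`x ≤ y` (component-wise), and all `α ≥ 0`. -/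
def DRSubmodular {n : ℕ} (f : (Fin n → ℝ) → ℝ) : Prop :=
  ∀ (i : Fin n) (x y : Fin n → ℝ), x ≤ y → ∀ α : ℝ, 0 ≤ α →
    f (y + α • (Pi.single i 1 : Fin n → ℝ)) - f y ≤ f (x + α • (Pi.single i 1 : Fin n → ℝ)) - f x

namespace DRSub

variable {n : ℕ} {f : (Fin n → ℝ) → ℝ}

theorem lineDerivAux (hf : Differentiable ℝ f) (z v : Fin n → ℝ) (t : ℝ) :
    HasDerivAt (fun t : ℝ => f (z + t • v)) (fderiv ℝ f (z + t • v) v) t := by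
  have hline : HasDerivAt (fun t : ℝ => z + t • v) v t := by
    simpa using ((hasDerivAt_id t).smul_const v).const_add z
  exact (hf (z + t • v)).hasFDerivAt.comp_hasDerivAt t hline

theorem hasFDerivAt_fderiv_apply (hf : ContDiff ℝ 2 f) (w x : Fin n → ℝ) :
    HasFDerivAt (fun y => fderiv ℝ f y w)
      ((ContinuousLinearMap.apply ℝ ℝ w).comp (fderiv ℝ (fderiv ℝ f) x)) x := by
  have hF : ContDiff ℝ 1 (fderiv ℝ f) := hf.fderiv_right (by norm_num)
  exact ((ContinuousLinearMap.apply ℝ ℝ w).hasFDerivAt).comp x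
    (hF.differentiable one_ne_zero x).hasFDerivAt

theorem lineDeriv2 (hf : ContDiff ℝ 2 f) (w z v : Fin n → ℝ) (t : ℝ) :
    HasDerivAt (fun t : ℝ => fderiv ℝ f (z + t • v) w)
      (fderiv ℝ (fderiv ℝ f) (z + t • v) v w) t := by
  have hline : HasDerivAt (fun t : ℝ => z + t • v) v t := by
    simpa using ((hasDerivAt_id t).smul_const v).const_add z
  exact (hasFDerivAt_fderiv_apply hf w (z + t • v)).comp_hasDerivAt t hline

/-- Step 1: partial derivatives of f decrease along coordinate directions. -/
theorem fderiv_anti (hf : ContDiff ℝ 2 f)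
    (hH : ∀ i j : Fin n, ∀ x, fderiv ℝ (fderiv ℝ f) x (Pi.single j 1) (Pi.single i 1) ≤ 0)
    (i j : Fin n) (z : Fin n → ℝ) {α : ℝ} (hα : 0 ≤ α) :
    fderiv ℝ f (z + α • (Pi.single i 1 : Fin n → ℝ)) (Pi.single j 1) ≤
      fderiv ℝ f z (Pi.single j 1) := by
  set ψ : ℝ → ℝ := fun s => fderiv ℝ f (z + s • (Pi.single i 1 : Fin n → ℝ)) (Pi.single j 1)
  have hder : ∀ s, HasDerivAt ψ
      (fderiv ℝ (fderiv ℝ f) (z + s • (Pi.single i 1 : Fin n → ℝ))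
        (Pi.single i 1) (Pi.single j 1)) s :=
    fun s => lineDeriv2 hf _ z _ s
  have hanti : Antitone ψ := by
    apply antitone_of_deriv_nonpos
    · exact fun s => (hder s).differentiableAt
    · intro s
      rw [(hder s).deriv]
      exact hH j i _
  have := hanti hα
  simpa [ψ] using this

theorem dr_of_hess (hf : ContDiff ℝ 2 f)
    (hH : ∀ i j : Fin n, ∀ x, fderiv ℝ (fderiv ℝ f) x (Pi.single j 1) (Pi.single i 1) ≤ 0) :
    DRSubmodular f := by
  intro i x y hxy α hα
  have hfd : Differentiable ℝ f := hf.differentiable (by norm_num)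
  set e : Fin n → ℝ := Pi.single i 1
  set v : Fin n → ℝ := y - x with hv
  set g : ℝ → ℝ := fun t => f ((x + α • e) + t • v) - f (x + t • v) with hg
  have hder : ∀ t, HasDerivAt g
      (fderiv ℝ f ((x + α • e) + t • v) v - fderiv ℝ f (x + t • v) v) t :=
    fun t => (lineDerivAux hfd (x + α • e) v t).sub (lineDerivAux hfd x v t)
  have hanti : Antitone g := by
    apply antitone_of_deriv_nonpos (fun t => (hder t).differentiableAt)
    intro t
    rw [(hder t).deriv]
    have hvsum : v = ∑ j : Fin n, (v j) • (Pi.single j 1 : Fin n → ℝ) := by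
      conv_lhs => rw [← Finset.univ_sum_single v]
      congr 1; ext j
      rw [← Pi.single_smul]
      simp
    have expand : ∀ p : Fin n → ℝ, fderiv ℝ f p v =
        ∑ j : Fin n, v j * fderiv ℝ f p (Pi.single j 1) := by
      intro p
      conv_lhs => rw [hvsum]
      rw [map_sum]
      simp
    rw [expand, expand, ← Finset.sum_sub_distrib]
    apply Finset.sum_nonpos
    intro j _
    rw [← mul_sub]
    apply mul_nonpos_of_nonneg_of_nonpos
    · have := hxy j; simpa [hv] using sub_nonneg.mpr this
    · have key : fderiv ℝ f ((x + t • v) + α • e) (Pi.single j 1) ≤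
          fderiv ℝ f (x + t • v) (Pi.single j 1) := fderiv_anti hf hH i j _ hα
      have hpt : (x + α • e) + t • v = (x + t • v) + α • e := by abel
      rw [hpt]
      linarith
  have h01 : g 1 ≤ g 0 := hanti zero_le_one
  have h1 : (x + α • e) + (1:ℝ) • v = y + α • e := by simp [hv]; abel
  have h0 : x + (1:ℝ) • v = y := by simp [hv]
  simp only [hg] at h01
  rw [h1, h0] at h01
  simpa using h01

theorem hess_eq (hf : ContDiff ℝ 2 f) (i j : Fin n) (x : Fin n → ℝ) :
    fderiv ℝ (fun y => fderiv ℝ f y (Pi.single i 1)) x (Pi.single j 1)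
      = fderiv ℝ (fderiv ℝ f) x (Pi.single j 1) (Pi.single i 1) := by
  rw [(hasFDerivAt_fderiv_apply hf (Pi.single i 1) x).fderiv]
  rfl

theorem cont_hess (hf : ContDiff ℝ 2 f) (u v : Fin n → ℝ) :
    Continuous fun z => fderiv ℝ (fderiv ℝ f) z v u := by
  have hF : ContDiff ℝ 1 (fderiv ℝ f) := hf.fderiv_right (by norm_num)
  have h := hF.continuous_fderiv one_ne_zero
  exact (h.clm_apply continuous_const).clm_apply continuous_const

theorem exists_hess_nonpos_near (hf : ContDiff ℝ 2 f) (hDR : DRSubmodular f)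
    (i j : Fin n) (x : Fin n → ℝ) {t : ℝ} (ht : 0 < t) :
    ∃ c d : ℝ, 0 < c ∧ c < t ∧ 0 < d ∧ d < t ∧
      fderiv ℝ (fderiv ℝ f)
        (x + c • (Pi.single i 1 : Fin n → ℝ) + d • (Pi.single j 1 : Fin n → ℝ))
        (Pi.single j 1) (Pi.single i 1) ≤ 0 := by
  have hfd : Differentiable ℝ f := hf.differentiable (by norm_num)
  set ei : Fin n → ℝ := Pi.single i 1 with hei
  set ej : Fin n → ℝ := Pi.single j 1 with hej
  have hle : x ≤ x + t • ej := by
    intro k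
    have h0 : (0:ℝ) ≤ (t • ej) k := by
      simp only [Pi.smul_apply, smul_eq_mul, hej, Pi.single_apply]
      split_ifs <;> simp [ht.le]
    simpa using le_add_of_nonneg_right (a := x k) h0
  have hD := hDR i x (x + t • ej) hle t ht.le
  -- first MVT
  set g : ℝ → ℝ := fun s => f ((x + t • ej) + s • ei) - f (x + s • ei) with hg
  set g' : ℝ → ℝ := fun s =>
    fderiv ℝ f ((x + t • ej) + s • ei) ei - fderiv ℝ f (x + s • ei) ei with hg'
  have hgder : ∀ s, HasDerivAt g (g' s) s :=
    fun s => (lineDerivAux hfd (x + t • ej) ei s).sub (lineDerivAux hfd x ei s)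
  obtain ⟨c, hc, hgc⟩ := exists_hasDerivAt_eq_slope g g' ht
    (HasDerivAt.continuousOn fun s _ => hgder s) (fun s _ => hgder s)
  have hgt0 : g t - g 0 ≤ 0 := by
    simp only [hg, zero_smul, add_zero]
    linarith
  have hgc0 : g' c ≤ 0 := by
    rw [hgc]
    exact div_nonpos_of_nonpos_of_nonneg (by simpa using hgt0) (by linarith)
  -- second MVT
  set ψ : ℝ → ℝ := fun s => fderiv ℝ f ((x + c • ei) + s • ej) ei with hψ
  set ψ' : ℝ → ℝ := fun s =>
    fderiv ℝ (fderiv ℝ f) ((x + c • ei) + s • ej) ej ei with hψ'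
  have hψder : ∀ s, HasDerivAt ψ (ψ' s) s := fun s => lineDeriv2 hf ei (x + c • ei) ej s
  obtain ⟨d, hd, hψd⟩ := exists_hasDerivAt_eq_slope ψ ψ' ht
    (HasDerivAt.continuousOn fun s _ => hψder s) (fun s _ => hψder s)
  have hpt : (x + c • ei) + t • ej = (x + t • ej) + c • ei := by abel
  have hψt0 : ψ t - ψ 0 ≤ 0 := by
    simp only [hψ, zero_smul, add_zero, hpt]
    simpa [hg'] using hgc0
  have hψd0 : ψ' d ≤ 0 := by
    rw [hψd]
    exact div_nonpos_of_nonpos_of_nonneg (by simpa using hψt0) (by linarith)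
  refine ⟨c, d, hc.1, hc.2, hd.1, hd.2, ?_⟩
  simpa [hψ'] using hψd0

theorem hess_of_dr (hf : ContDiff ℝ 2 f) (hDR : DRSubmodular f)
    (i j : Fin n) (x : Fin n → ℝ) :
    fderiv ℝ (fderiv ℝ f) x (Pi.single j 1) (Pi.single i 1) ≤ 0 := by
  by_contra hpos
  push_neg at hpos
  set Q : (Fin n → ℝ) → ℝ := fun z => fderiv ℝ (fderiv ℝ f) z (Pi.single j 1) (Pi.single i 1)
    with hQ
  have hcont : Continuous Q := cont_hess hf (Pi.single i 1) (Pi.single j 1)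
  obtain ⟨δ, hδ0, hδ⟩ := Metric.continuousAt_iff.mp (hcont.continuousAt (x := x)) (Q x) hpos
  have ht : (0:ℝ) < δ / 2 := by linarith
  obtain ⟨c, d, hc0, hct, hd0, hdt, hQξ⟩ := exists_hess_nonpos_near hf hDR i j x ht
  set ξ : Fin n → ℝ := x + c • (Pi.single i 1 : Fin n → ℝ) + d • (Pi.single j 1 : Fin n → ℝ)
    with hξ
  have hdist : dist ξ x < δ := by
    rw [dist_eq_norm]
    have hsub : ξ - x = c • (Pi.single i 1 : Fin n → ℝ) + d • (Pi.single j 1 : Fin n → ℝ) := by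
      rw [hξ]; abel
    rw [hsub]
    calc ‖c • (Pi.single i 1 : Fin n → ℝ) + d • (Pi.single j 1 : Fin n → ℝ)‖
        ≤ ‖c • (Pi.single i 1 : Fin n → ℝ)‖ + ‖d • (Pi.single j 1 : Fin n → ℝ)‖ :=
          norm_add_le _ _
      _ = |c| * ‖(Pi.single i 1 : Fin n → ℝ)‖ + |d| * ‖(Pi.single j 1 : Fin n → ℝ)‖ := by
          rw [norm_smul, norm_smul]; simp
      _ ≤ |c| + |d| := by
          have h1 : ‖(Pi.single i (1:ℝ) : Fin n → ℝ)‖ = 1 := by rw [Pi.norm_single]; simp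
          have h2 : ‖(Pi.single j (1:ℝ) : Fin n → ℝ)‖ = 1 := by rw [Pi.norm_single]; simp
          rw [h1, h2]; ring_nf; rfl
      _ < δ := by rw [abs_of_pos hc0, abs_of_pos hd0]; linarith
  have := hδ hdist
  rw [Real.dist_eq, abs_sub_lt_iff] at this
  have : 0 < Q ξ := by linarith [this.2]
  exact absurd hQξ (not_le.mpr this)

end DRSub

/-- A twice continuously differentiable `f : ℝ^n → ℝ` is DR-submodular iff all
entries of its Hessian are nonpositive at every point. -/
theorem drSubmodular_iff_hessian_nonpos {n : ℕ}
    (f : (Fin n → ℝ) → ℝ) (hf : ContDiff ℝ 2 f) :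
    DRSubmodular f ↔
      ∀ (i j : Fin n) (x : Fin n → ℝ),
        fderiv ℝ (fun y => fderiv ℝ f y (Pi.single i 1)) x (Pi.single j 1) ≤ 0 := by
  constructor
  · intro hDR i j x
    rw [DRSub.hess_eq hf]
    exact DRSub.hess_of_dr hf hDR i j x
  · intro hH
    apply DRSub.dr_of_hess hf
    intro i j x
    rw [← DRSub.hess_eq hf]
    exact hH i j x
end

section
/- Let u ∈ ℝ with u > 0 and u ∉ ℤ. For every x₁ ∈ ℝ and every x₂ ∈ ℤ satisfying 0 ≤ x₁ ≤ u and x₁ ≤ x₂, the mixed-integer rounding (MIR) inequality holds: x₂ + (u − x₁)/(u − ⌊u⌋) ≥ ⌈u⌉. -/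
/-- The mixed-integer rounding (MIR) inequality: for `u > 0` with `u ∉ ℤ`, every
`(x₁, x₂) ∈ ℝ × ℤ` with `0 ≤ x₁ ≤ u` and `x₁ ≤ x₂` satisfies
`x₂ + (u − x₁)/(u − ⌊u⌋) ≥ ⌈u⌉`. -/
theorem mir_inequality (u : ℝ) (hu : 0 < u) (hu' : ∀ z : ℤ, (z : ℝ) ≠ u)
    (x₁ : ℝ) (x₂ : ℤ) (h0 : 0 ≤ x₁) (hu1 : x₁ ≤ u) (h12 : x₁ ≤ (x₂ : ℝ)) :
    (⌈u⌉ : ℝ) ≤ (x₂ : ℝ) + (u - x₁) / (u - ⌊u⌋) := by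
  have hfl : (⌊u⌋ : ℝ) < u := lt_of_le_of_ne (Int.floor_le u) (hu' ⌊u⌋)
  have hf : 0 < u - ⌊u⌋ := by linarith
  have hf1 : u - ⌊u⌋ ≤ 1 := by
    have := Int.lt_floor_add_one u
    linarith
  have hceil : (⌈u⌉ : ℤ) = ⌊u⌋ + 1 := by
    have h1 : ⌈u⌉ ≤ ⌊u⌋ + 1 := Int.ceil_le.mpr (by push_cast; linarith)
    have h2 : (⌊u⌋ : ℝ) < (⌈u⌉ : ℝ) := lt_of_lt_of_le hfl (Int.le_ceil u)
    have h3 : ⌊u⌋ < ⌈u⌉ := by exact_mod_cast h2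
    omega
  rcases le_or_gt (⌈u⌉ : ℤ) x₂ with h | h
  · have h1 : ((⌈u⌉ : ℤ) : ℝ) ≤ (x₂ : ℝ) := by exact_mod_cast h
    have h2 : 0 ≤ (u - x₁) / (u - ⌊u⌋) := div_nonneg (by linarith) hf.le
    linarith
  · have hx2 : x₂ ≤ ⌊u⌋ := by omega
    have hx2' : (x₂ : ℝ) ≤ (⌊u⌋ : ℝ) := by exact_mod_cast hx2
    have hk : (0:ℝ) ≤ (⌊u⌋ : ℝ) - x₂ := by linarith
    have hc : ((⌈u⌉:ℤ):ℝ) = (⌊u⌋:ℝ) + 1 := by exact_mod_cast hceil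
    rw [hc, ← sub_le_iff_le_add', le_div_iff₀ hf]
    nlinarith
end
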